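/- arXiv:1205.2904 — 8 statements merged into one kernel-verified Lean document; each statement's English description precedes it below -/
import Mathlib

section
/- Let T be an odd positive integer, τ ∈ ℂ with Im τ > 0, v ∈ ℂ, and u ∈ ℂ with u ∉ (1/T)ℤ + τℤ. Then A_T(u,v;τ) = Σ_{t=0}^{T−1} e^{2πiut}·A(Tu, v + tτ + (T−1)/2; Tτ). -/
open Complex Real Filter

/-- The Appell–Lerch sum `A(u,v;τ)`. -/
noncomputable def appell (u v τ : ℂ) : ℂ :=
  Complex.exp (π * I * u) *
    ∑' n : ℤ, (-1 : ℂ) ^ n * Complex.exp (π * I * ((n : ℂ) ^ 2 + n) * τ + 2 * π * I * n * v) /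
      (1 - Complex.exp (2 * π * I * n * τ + 2 * π * I * u))

/-- The higher-level Appell–Lerch sum `A_T(u,v;τ)`. -/
noncomputable def appellT (T : ℕ) (u v τ : ℂ) : ℂ :=
  Complex.exp (π * I * u * T) *
    ∑' n : ℤ, (-1 : ℂ) ^ ((T : ℤ) * n) *
        Complex.exp (π * I * T * n * ((n : ℂ) + 1) * τ + 2 * π * I * n * v) /
      (1 - Complex.exp (2 * π * I * u) * Complex.exp (2 * π * I * n * τ))

-- norm of the denominator is eventually bounded below by 1/2
lemma denom_eventually_ge (τ' s : ℂ) (hτ' : 0 < τ'.im) :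
    ∀ᶠ n : ℤ in cofinite, (1:ℝ)/2 ≤ ‖1 - Complex.exp (2 * π * I * n * τ' + s)‖ := by
  have hre : ∀ n : ℤ, (2 * π * I * (n:ℂ) * τ' + s).re = -(2 * π * τ'.im * n) + s.re := by
    intro n
    have h : 2 * (π:ℂ) * I * (n:ℂ) * τ' = ((2 * π * (n:ℝ) : ℝ) : ℂ) * (τ' * I) := by
      push_cast; ring
    rw [Complex.add_re, h, Complex.re_ofReal_mul, Complex.mul_I_re]
    ring
  have hnorm : ∀ n : ℤ, ‖Complex.exp (2 * π * I * n * τ' + s)‖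
      = Real.exp (-(2 * π * τ'.im * n) + s.re) := by
    intro n
    rw [Complex.norm_exp, hre]
  have hcoef : 0 < 2 * π * τ'.im := by positivity
  have hlin : Tendsto (fun n : ℤ => 2 * π * τ'.im * (n:ℝ)) atTop atTop :=
    (tendsto_intCast_atTop_atTop).const_mul_atTop hcoef
  have hlinb : Tendsto (fun n : ℤ => 2 * π * τ'.im * (n:ℝ)) atBot atBot :=
    (tendsto_intCast_atBot_iff.mpr tendsto_id).const_mul_atBot hcoef
  rw [Int.cofinite_eq, eventually_sup]
  constructor
  · -- atBot : exp blows up, norm large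
    have h1 : Tendsto (fun n : ℤ => -(2 * π * τ'.im * (n:ℝ)) + s.re) atBot atTop :=
      tendsto_atTop_add_const_right _ _ (tendsto_neg_atBot_atTop.comp hlinb)
    have h2 : Tendsto (fun n : ℤ => Real.exp (-(2 * π * τ'.im * (n:ℝ)) + s.re)) atBot atTop :=
      Real.tendsto_exp_atTop.comp h1
    filter_upwards [h2.eventually_ge_atTop (3/2)] with n hn
    have := norm_sub_norm_le (Complex.exp (2 * π * I * n * τ' + s)) 1
    rw [norm_one, hnorm n] at this
    rw [norm_sub_rev]
    linarith
  · -- atTop : exp small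
    have h1 : Tendsto (fun n : ℤ => -(2 * π * τ'.im * (n:ℝ)) + s.re) atTop atBot :=
      tendsto_atBot_add_const_right _ _ (tendsto_neg_atTop_atBot.comp hlin)
    have h2 : Tendsto (fun n : ℤ => Real.exp (-(2 * π * τ'.im * (n:ℝ)) + s.re)) atTop (nhds 0) :=
      Real.tendsto_exp_atBot.comp h1
    have h3 : ∀ᶠ n : ℤ in atTop,
        Real.exp (-(2 * π * τ'.im * (n:ℝ)) + s.re) < 1/2 :=
      h2.eventually (eventually_lt_nhds (by norm_num : (0:ℝ) < 1/2))
    filter_upwards [h3] with n hn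
    have := norm_sub_norm_le (1:ℂ) (Complex.exp (2 * π * I * n * τ' + s))
    rw [norm_one, hnorm n] at this
    linarith

lemma summable_appell_term (τ' w s : ℂ) (hτ' : 0 < τ'.im) :
    Summable (fun n : ℤ => (-1 : ℂ) ^ n *
      Complex.exp (π * I * ((n : ℂ) ^ 2 + n) * τ' + 2 * π * I * n * w) /
      (1 - Complex.exp (2 * π * I * n * τ' + s))) := by
  have hnum : ∀ n : ℤ, ‖(-1:ℂ)^n * Complex.exp (π * I * ((n:ℂ)^2 + n) * τ' + 2 * π * I * n * w)‖
      = ‖jacobiTheta₂_term n (w + τ'/2) τ'‖ := by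
    intro n
    rw [norm_mul]
    have h1 : ‖(-1:ℂ)^n‖ = 1 := by
      rw [norm_zpow, norm_neg, norm_one, one_zpow]
    rw [h1, one_mul, jacobiTheta₂_term]
    congr 2
    ring
  apply Summable.of_norm_bounded_eventually
    (g := fun n : ℤ => 2 * ‖jacobiTheta₂_term n (w + τ'/2) τ'‖)
  · exact (summable_norm_iff.mpr ((summable_jacobiTheta₂_term_iff _ _).mpr hτ')).mul_left 2
  · filter_upwards [denom_eventually_ge τ' s hτ'] with n hn
    rw [norm_div, hnum n]
    rw [div_le_iff₀ (by linarith)]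
    nlinarith [norm_nonneg (jacobiTheta₂_term n (w + τ'/2) τ'),
      norm_nonneg (1 - Complex.exp (2 * π * I * n * τ' + s))]

lemma exp_T_ne_one (T : ℕ) (hTpos : 0 < T) (τ u : ℂ)
    (hu : ∀ a b : ℤ, u ≠ (a : ℂ) / T + (b : ℂ) * τ) (n : ℤ) :
    Complex.exp (2 * π * I * (u + n * τ)) ^ T ≠ 1 := by
  rw [← Complex.exp_nat_mul]
  intro h
  rw [Complex.exp_eq_one_iff] at h
  obtain ⟨k, hk⟩ := h
  have hT : (T : ℂ) ≠ 0 := Nat.cast_ne_zero.mpr hTpos.ne'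
  have h2 : (2 * (π:ℂ) * I) ≠ 0 := by
    simp [Real.pi_ne_zero, Complex.I_ne_zero]
  have key : (T:ℂ) * (u + n * τ) = k := by
    apply mul_left_cancel₀ h2
    linear_combination hk
  apply hu k (-n)
  push_cast
  field_simp
  linear_combination key

/-- `A_T(u,v;τ) = ∑_{t=0}^{T−1} e^{2πiut}·A(Tu, v + tτ + (T−1)/2; Tτ)`. -/
theorem appellT_eq_sum_appell (T : ℕ) (hT : Odd T) (hTpos : 0 < T) (τ u v : ℂ)
    (hτ : 0 < τ.im) (hu : ∀ a b : ℤ, u ≠ (a : ℂ) / T + (b : ℂ) * τ) :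
    appellT T u v τ =
      ∑ t ∈ Finset.range T,
        Complex.exp (2 * π * I * u * t) *
          appell (T * u) (v + t * τ + ((T : ℂ) - 1) / 2) (T * τ) := by
  obtain ⟨m, hm⟩ := hT
  have hτ' : 0 < ((T:ℂ) * τ).im := by
    rw [Complex.mul_im]
    simp only [Complex.natCast_re, Complex.natCast_im, zero_mul, add_zero]
    positivity
  have hy1 : ∀ n : ℤ, Complex.exp (2 * π * I * (u + n * τ)) ^ T ≠ 1 :=
    exp_T_ne_one T hTpos τ u hu
  have hyne : ∀ n : ℤ, Complex.exp (2 * π * I * (u + n * τ)) ≠ 1 := by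
    intro n h
    exact hy1 n (by rw [h, one_pow])
  -- summability of each inner series (with constants)
  have hsum : ∀ t ∈ Finset.range T, Summable (fun n : ℤ =>
      (Complex.exp (2 * π * I * u * t) * Complex.exp (π * I * ((T:ℂ) * u))) *
      ((-1 : ℂ) ^ n * Complex.exp (π * I * ((n : ℂ) ^ 2 + n) * ((T:ℂ) * τ) +
          2 * π * I * n * (v + t * τ + ((T : ℂ) - 1) / 2)) /
        (1 - Complex.exp (2 * π * I * n * ((T:ℂ) * τ) + 2 * π * I * ((T:ℂ) * u))))) := by
    intro t _
    exact (summable_appell_term ((T:ℂ) * τ) (v + t * τ + ((T : ℂ) - 1) / 2)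
      (2 * π * I * ((T:ℂ) * u)) hτ').mul_left _
  unfold appell appellT
  have step1 : ∀ t ∈ Finset.range T,
      Complex.exp (2 * π * I * u * t) *
        (Complex.exp (π * I * ((T:ℂ) * u)) *
          ∑' n : ℤ, (-1 : ℂ) ^ n * Complex.exp (π * I * ((n : ℂ) ^ 2 + n) * ((T:ℂ) * τ) +
              2 * π * I * n * (v + t * τ + ((T : ℂ) - 1) / 2)) /
            (1 - Complex.exp (2 * π * I * n * ((T:ℂ) * τ) + 2 * π * I * ((T:ℂ) * u))))
      = ∑' n : ℤ,
        (Complex.exp (2 * π * I * u * t) * Complex.exp (π * I * ((T:ℂ) * u))) *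
        ((-1 : ℂ) ^ n * Complex.exp (π * I * ((n : ℂ) ^ 2 + n) * ((T:ℂ) * τ) +
            2 * π * I * n * (v + t * τ + ((T : ℂ) - 1) / 2)) /
          (1 - Complex.exp (2 * π * I * n * ((T:ℂ) * τ) + 2 * π * I * ((T:ℂ) * u)))) := by
    intro t _
    rw [← mul_assoc]
    exact tsum_mul_left.symm
  rw [Finset.sum_congr rfl step1, ← Summable.tsum_finsetSum hsum, ← tsum_mul_left]
  refine tsum_congr fun n => ?_
  -- now the per-n identity
  set y := Complex.exp (2 * π * I * (u + n * τ)) with hy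
  have hyT : y ^ T ≠ 1 := hy1 n
  have hy_ne : y ≠ 1 := hyne n
  have hden1 : 1 - Complex.exp (2 * π * I * u) * Complex.exp (2 * π * I * n * τ) = 1 - y := by
    rw [hy, ← Complex.exp_add]
    congr 2
    ring
  have hden2 : 1 - Complex.exp (2 * π * I * n * ((T:ℂ) * τ) + 2 * π * I * ((T:ℂ) * u))
      = 1 - y ^ T := by
    rw [hy, ← Complex.exp_nat_mul]
    congr 2
    ring
  have hm' : (T : ℂ) = 2 * m + 1 := by exact_mod_cast congrArg (Nat.cast : ℕ → ℂ) hm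
  have hneg : (-1 : ℂ) ^ ((T:ℤ) * n) = (-1 : ℂ) ^ n := by
    have : (T:ℤ) * n = n + 2 * (m * n) := by
      have : (T:ℤ) = 2 * m + 1 := by exact_mod_cast hm
      rw [this]; ring
    rw [this, zpow_add₀ (by norm_num : (-1:ℂ) ≠ 0), zpow_mul]
    norm_num
  set K := Complex.exp (π * I * u * T) * ((-1 : ℂ) ^ ((T:ℤ) * n) *
      Complex.exp (π * I * T * n * ((n:ℂ) + 1) * τ + 2 * π * I * n * v)) with hK
  have step2 : ∀ t ∈ Finset.range T,
      (Complex.exp (2 * π * I * u * t) * Complex.exp (π * I * ((T:ℂ) * u))) *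
        ((-1 : ℂ) ^ n * Complex.exp (π * I * ((n : ℂ) ^ 2 + n) * ((T:ℂ) * τ) +
            2 * π * I * n * (v + t * τ + ((T : ℂ) - 1) / 2)) /
          (1 - Complex.exp (2 * π * I * n * ((T:ℂ) * τ) + 2 * π * I * ((T:ℂ) * u))))
      = K * y ^ t / (1 - y ^ T) := by
    intro t _
    rw [hden2, mul_div_assoc']
    congr 1
    have hexp2 : Complex.exp (π * I * (n:ℂ) * ((T:ℂ) - 1)) = 1 := by
      have harg : π * I * (n:ℂ) * ((T:ℂ) - 1) = ((m * n : ℤ) : ℂ) * (2 * π * I) := by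
        push_cast [hm']
        ring
      rw [harg, Complex.exp_int_mul_two_pi_mul_I]
    have hyt : y ^ t = Complex.exp ((t:ℂ) * (2 * π * I * (u + n * τ))) := by
      rw [hy, ← Complex.exp_nat_mul]
    have h4 : ∀ a b : ℂ, Complex.exp a * Complex.exp b = Complex.exp (a + b) :=
      fun a b => (Complex.exp_add a b).symm
    set A := π * I * ((n:ℂ) ^ 2 + n) * ((T:ℂ) * τ) +
        2 * π * I * n * (v + t * τ + ((T:ℂ) - 1) / 2) with hA
    set B := π * I * (T:ℂ) * (n:ℂ) * ((n:ℂ) + 1) * τ + 2 * π * I * n * v with hB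
    calc Complex.exp (2 * π * I * u * t) * Complex.exp (π * I * ((T:ℂ) * u)) *
          ((-1 : ℂ) ^ n * Complex.exp A)
        = (-1 : ℂ) ^ n * (Complex.exp A * Complex.exp (2 * π * I * u * t) *
            Complex.exp (π * I * ((T:ℂ) * u))) := by ring
      _ = (-1 : ℂ) ^ n * Complex.exp (A + 2 * π * I * u * t + π * I * ((T:ℂ) * u)) := by
          rw [h4, h4]
      _ = (-1 : ℂ) ^ n * (Complex.exp (B + π * I * u * (T:ℂ) +
            (t:ℂ) * (2 * π * I * (u + n * τ))) * Complex.exp (π * I * (n:ℂ) * ((T:ℂ) - 1))) := by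
          rw [h4]
          congr 2
          rw [hA, hB]
          push_cast
          ring
      _ = (-1 : ℂ) ^ n * Complex.exp (B + π * I * u * (T:ℂ) +
            (t:ℂ) * (2 * π * I * (u + n * τ))) := by rw [hexp2, mul_one]
      _ = K * y ^ t := by
          rw [hK, hneg, hyt, ← h4, ← h4]
          ring
  rw [Finset.sum_congr rfl step2]
  rw [← Finset.sum_div, ← Finset.mul_sum, geom_sum_eq hy_ne]
  rw [hden1, hK, hneg]
  have h1 : (1:ℂ) - y ≠ 0 := sub_ne_zero.mpr (Ne.symm hy_ne)
  have h2 : (1:ℂ) - y ^ T ≠ 0 := sub_ne_zero.mpr (Ne.symm hyT)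
  have h3 : y - 1 ≠ 0 := sub_ne_zero.mpr hy_ne
  field_simp
  ring
end

section
/- Let T be an odd positive integer, k a positive integer, and h an integer with gcd(h,k) = 1; set γ := gcd(T,k) and γ' := T/γ. Then for every w ∈ ℂ with sinh(w) ≠ 0: Σ_{t=−(T−1)/2}^{(T−1)/2} e^{−2w·ρ_T(t·γ'·h)/γ'} = γ'·sinh(γw)/sinh(w). (Equivalently, (1/(γ'·sinh(γw)))·Σ_t e^{−2w·ρ_T(tγ'h)/γ'} = 1/sinh(w), independently of h and k.) -/
open Complex Real

private lemma bmod_congr' {a b : ℤ} (n : ℕ) (h : a % n = b % n) :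
    Int.bmod a n = Int.bmod b n := by
  rw [← Int.emod_bmod (x := a), ← Int.emod_bmod (x := b), h]

private lemma bmod_eq_self' (n : ℕ) (hn : 0 < n) (x : ℤ)
    (h1 : -(n:ℤ) < 2*x) (h2 : 2*x < n) : Int.bmod x n = x := by
  have hd : (n:ℤ) ∣ Int.bmod x n - x := Int.dvd_bmod_sub_self
  have hle : Int.bmod x n ≤ ((n:ℤ) - 1)/2 := Int.bmod_le hn
  have hge : -((n:ℤ)/2) ≤ Int.bmod x n := Int.le_bmod hn
  have : Int.bmod x n - x = 0 := Int.eq_zero_of_abs_lt_dvd hd (by rw [abs_lt]; omega)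
  omega

private lemma bmod_mul_left (a b : ℕ) (ha : Odd a) (hb : Odd b) (x : ℤ) :
    Int.bmod ((a:ℤ) * x) (a * b) = a * Int.bmod x b := by
  have hapos : 0 < a := ha.pos
  have hbpos : 0 < b := hb.pos
  have habpos : 0 < a*b := Nat.mul_pos hapos hbpos
  have habodd : Odd (a*b) := ha.mul hb
  set B := Int.bmod ((a:ℤ)*x) (a*b) with hBdef
  set r := Int.bmod x b with hrdef
  have hd1 : ((a*b : ℕ):ℤ) ∣ B - (a:ℤ)*x := Int.dvd_bmod_sub_self
  have hd2 : (b:ℤ) ∣ r - x := Int.dvd_bmod_sub_self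
  have hd3 : ((a*b : ℕ):ℤ) ∣ (a:ℤ) * r - (a:ℤ)*x := by
    obtain ⟨c, hc⟩ := hd2
    exact ⟨c, by push_cast; rw [show (a:ℤ)*r - a*x = a*(r - x) by ring, hc]; ring⟩
  have hd : ((a*b : ℕ):ℤ) ∣ B - (a:ℤ) * r := by
    have := dvd_sub hd1 hd3
    simpa using this
  have hB1 : B ≤ (((a*b:ℕ):ℤ) - 1)/2 := Int.bmod_le habpos
  have hB2 : -(((a*b:ℕ):ℤ)/2) ≤ B := Int.le_bmod habpos
  have hr1 : r ≤ ((b:ℤ) - 1)/2 := Int.bmod_le hbpos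
  have hr2 : -((b:ℤ)/2) ≤ r := Int.le_bmod hbpos
  have hbo : b % 2 = 1 := Nat.odd_iff.mp hb
  have habo : (a*b) % 2 = 1 := Nat.odd_iff.mp habodd
  have h2r1 : 2*r ≤ (b:ℤ) - 1 := by omega
  have h2r2 : -((b:ℤ) - 1) ≤ 2*r := by omega
  have haZ : (0:ℤ) < (a:ℤ) := by exact_mod_cast hapos
  have hmul1 : 2*((a:ℤ)*r) ≤ (a:ℤ)*b - a := by nlinarith
  have hmul2 : -((a:ℤ)*b - a) ≤ 2*((a:ℤ)*r) := by nlinarith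
  have habI : ((a*b:ℕ):ℤ) = (a:ℤ)*b := by push_cast; ring
  have h2B1 : 2*B ≤ (a:ℤ)*b - 1 := by omega
  have h2B2 : -((a:ℤ)*b - 1) ≤ 2*B := by omega
  have hzero : B - (a:ℤ)*r = 0 := by
    refine Int.eq_zero_of_abs_lt_dvd hd ?_
    rw [abs_lt, habI]
    constructor <;> linarith
  linarith

/-- single period sum over ZMod -/
private lemma sum_Ico_zmod (n : ℕ) [NeZero n] (g : ZMod n → ℂ) (c : ℤ) :
    ∑ t ∈ Finset.Ico c (c + n), g (t : ZMod n) = ∑ x : ZMod n, g x := by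
  refine Finset.sum_nbij' (i := fun t => (t : ZMod n))
    (j := fun x => c + ((x - (c : ZMod n)).val : ℤ)) ?_ ?_ ?_ ?_ ?_
  · intro t ht; exact Finset.mem_univ _
  · intro x _
    have := ZMod.val_lt (x - (c : ZMod n))
    simp only [Finset.mem_Ico]
    omega
  · intro t ht
    simp only [Finset.mem_Ico] at ht
    have h1 : ((((t : ZMod n) - (c : ZMod n)).val : ℤ)) = (t - c) % n := by
      rw [show ((t : ZMod n) - (c : ZMod n)) = ((t - c : ℤ) : ZMod n) by push_cast; ring]
      exact ZMod.val_intCast _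
    rw [h1, Int.emod_eq_of_lt (by omega) (by omega)]
    ring
  · intro x _
    push_cast
    simp
  · intro t ht; rfl

private lemma sum_Ico_zmod_mul (n : ℕ) [NeZero n] (g : ZMod n → ℂ) (m : ℕ) (c : ℤ) :
    ∑ t ∈ Finset.Ico c (c + (m*n : ℕ)), g (t : ZMod n) = m * ∑ x : ZMod n, g x := by
  induction m generalizing c with
  | zero => simp
  | succ p ih =>
    have h1 : c ≤ c + ((p*n : ℕ) : ℤ) := le_add_of_nonneg_right (Int.natCast_nonneg _)
    have h2 : c + ((p*n : ℕ) : ℤ) ≤ c + (((p+1)*n : ℕ) : ℤ) :=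
      (add_le_add_iff_left c).mpr (by exact_mod_cast Nat.mul_le_mul_right n (Nat.le_succ p))
    have harg : (c + ((p*n : ℕ) : ℤ)) + (n : ℤ) = c + (((p+1)*n : ℕ) : ℤ) := by push_cast; ring
    rw [← Finset.Ico_union_Ico_eq_Ico h1 h2,
      Finset.sum_union (Finset.Ico_disjoint_Ico_consecutive _ _ _), ih, ← harg,
      sum_Ico_zmod n]
    push_cast
    ring

private lemma sum_mul_unit (n : ℕ) [NeZero n] (g : ZMod n → ℂ) (u : ZMod n) (hu : IsUnit u) :
    ∑ x : ZMod n, g (x * u) = ∑ x : ZMod n, g x :=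
  hu.elim fun v hv => hv ▸ Fintype.sum_bijective (fun x : ZMod n => x * (v : ZMod n))
    (Units.mulRight_bijective v) (fun x => g (x * (v : ZMod n))) g (fun _ => rfl)

private lemma geom_sinh (w : ℂ) (hw : Complex.sinh w ≠ 0) (m : ℕ) :
    ∑ t ∈ Finset.Icc (-(m:ℤ)) (m:ℤ), Complex.exp (-2 * w * (t : ℂ)) =
      Complex.sinh (((2*m+1 : ℕ) : ℂ) * w) / Complex.sinh w := by
  induction m with
  | zero => simp [div_self hw]
  | succ n ih =>
    have hsplit : Finset.Icc (-((n+1 : ℕ):ℤ)) ((n+1 : ℕ):ℤ) =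
        insert (-((n+1 : ℕ):ℤ)) (insert (((n+1 : ℕ):ℤ)) (Finset.Icc (-(n:ℤ)) (n:ℤ))) := by
      ext x
      simp only [Finset.mem_Icc, Finset.mem_insert]
      push_cast
      omega
    have hnm1 : (-((n+1 : ℕ):ℤ)) ∉ insert (((n+1 : ℕ):ℤ)) (Finset.Icc (-(n:ℤ)) (n:ℤ)) := by
      simp only [Finset.mem_insert, Finset.mem_Icc]
      push_cast
      omega
    have hnm2 : (((n+1 : ℕ):ℤ)) ∉ Finset.Icc (-(n:ℤ)) (n:ℤ) := by
      simp only [Finset.mem_Icc]; push_cast; omega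
    rw [hsplit, Finset.sum_insert hnm1, Finset.sum_insert hnm2, ih]
    have key : Complex.sinh (((2*(n+1)+1 : ℕ):ℂ) * w) =
        Complex.sinh (((2*n+1 : ℕ):ℂ) * w)
          + (Complex.exp (2*((n:ℂ)+1)*w) + Complex.exp (-(2*((n:ℂ)+1)*w))) * Complex.sinh w := by
      have ha : Complex.exp w ≠ 0 := Complex.exp_ne_zero w
      have hE : Complex.exp (2*(n:ℂ)*w) ≠ 0 := Complex.exp_ne_zero _
      have f1 : (((2*(n+1)+1 : ℕ):ℂ)) * w = 2*(n:ℂ)*w + (w+w+w) := by push_cast; ring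
      have f2 : (((2*n+1 : ℕ):ℂ)) * w = 2*(n:ℂ)*w + w := by push_cast; ring
      have f3 : (2*((n:ℂ)+1)*w) = 2*(n:ℂ)*w + (w+w) := by ring
      rw [f1, f2, f3]
      have huv : Complex.exp w * Complex.exp (-w) = 1 := by
        rw [← Complex.exp_add]; simp
      simp only [Complex.sinh, neg_add, Complex.exp_add]
      linear_combination ((Complex.exp (2*(n:ℂ)*w) * Complex.exp w
        - Complex.exp (-(2*(n:ℂ)*w)) * Complex.exp (-w))/2) * huv
    rw [key]
    have e1 : (-2 * w * ((-((n+1:ℕ):ℤ) : ℤ) : ℂ)) = 2*((n:ℂ)+1)*w := by push_cast; ring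
    have e2 : (-2 * w * (((n+1:ℕ):ℤ) : ℂ)) = -(2*((n:ℂ)+1)*w) := by push_cast; ring
    rw [e1, e2]
    field_simp
    ring

/-- For odd positive `T`, `ρ_T(x) = Int.bmod x T` is the residue of `x` modulo `T` of
smallest absolute value. With `γ = gcd(T,k)` and `γ' = T/γ`,
`∑_{t=−(T−1)/2}^{(T−1)/2} e^{−2w·ρ_T(tγ'h)/γ'} = γ'·sinh(γw)/sinh(w)`. -/
theorem sum_exp_rho_eq (T k : ℕ) (hT : Odd T) (hTpos : 0 < T) (hk : 0 < k)
    (h : ℤ) (hcop : Int.gcd h k = 1) (w : ℂ) (hw : Complex.sinh w ≠ 0) :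
    ∑ t ∈ Finset.Icc (-(((T : ℤ) - 1) / 2)) (((T : ℤ) - 1) / 2),
        Complex.exp (-2 * w *
            ((Int.bmod (t * ((T / Nat.gcd T k : ℕ) : ℤ) * h) T : ℤ) : ℂ) /
          ((T / Nat.gcd T k : ℕ) : ℂ)) =
      ((T / Nat.gcd T k : ℕ) : ℂ) * Complex.sinh ((Nat.gcd T k : ℂ) * w) /
        Complex.sinh w := by
  set γ : ℕ := Nat.gcd T k with hγdef
  set γ' : ℕ := T / γ with hγ'def
  have hγdvdT : γ ∣ T := Nat.gcd_dvd_left T k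
  have hγdvdk : γ ∣ k := Nat.gcd_dvd_right T k
  have hTeq : γ' * γ = T := Nat.div_mul_cancel hγdvdT
  have hmulodd : Odd (γ' * γ) := hTeq ▸ hT
  have hγodd : Odd γ := (Nat.odd_mul.mp hmulodd).2
  have hγ'odd : Odd γ' := (Nat.odd_mul.mp hmulodd).1
  have hγpos : 0 < γ := hγodd.pos
  have hγ'pos : 0 < γ' := hγ'odd.pos
  haveI : NeZero γ := ⟨hγpos.ne'⟩
  have hγ'ne : ((γ' : ℕ) : ℂ) ≠ 0 := Nat.cast_ne_zero.mpr hγ'pos.ne'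
  -- coprimality of h and γ
  have hcopγ : Int.gcd h (γ : ℤ) = 1 := by
    have hdvd : Int.gcd h (γ : ℤ) ∣ Int.gcd h (k : ℤ) := by
      apply Nat.dvd_gcd (Nat.gcd_dvd_left _ _)
      exact dvd_trans (Nat.gcd_dvd_right _ _) (by simpa using hγdvdk)
    rw [hcop] at hdvd
    exact Nat.eq_one_of_dvd_one hdvd
  -- h is a unit mod γ
  have hu : IsUnit ((h : ZMod γ)) := by
    obtain ⟨u, v, huv⟩ := Int.isCoprime_iff_gcd_eq_one.mpr hcopγ
    have hc := congrArg (fun z : ℤ => ((z : ZMod γ))) huv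
    push_cast at hc
    simp only [ZMod.natCast_self, mul_zero, add_zero] at hc
    exact IsUnit.of_mul_eq_one _ (mul_comm (u : ZMod γ) (h : ZMod γ) ▸ hc)
  -- the period function
  set g₀ : ZMod γ → ℂ := fun y => Complex.exp (-2 * w * ((Int.bmod (y.val : ℤ) γ : ℤ) : ℂ))
    with hg₀def
  -- rewrite each summand
  have hterm : ∀ t : ℤ, Complex.exp (-2 * w * ((Int.bmod (t * (γ' : ℤ) * h) T : ℤ) : ℂ) / ((γ' : ℕ) : ℂ))
      = g₀ ((t : ZMod γ) * (h : ZMod γ)) := by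
    intro t
    have hb : Int.bmod (t * (γ' : ℤ) * h) T = (γ' : ℤ) * Int.bmod (t * h) γ := by
      rw [← hTeq, show t * (γ' : ℤ) * h = (γ' : ℤ) * (t * h) by ring]
      exact_mod_cast bmod_mul_left γ' γ hγ'odd hγodd (t * h)
    have hb2 : Int.bmod (t * h) γ = Int.bmod ((((t : ZMod γ) * (h : ZMod γ)).val : ℤ)) γ := by
      apply bmod_congr'
      have hcast : ((t * h : ℤ) : ZMod γ) = ((((t : ZMod γ) * (h : ZMod γ)).val : ℤ) : ZMod γ) := by
        push_cast
        simp [ZMod.natCast_val, ZMod.intCast_cast]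
      exact (ZMod.intCast_eq_intCast_iff _ _ _).mp hcast
    rw [hb, hb2]
    congr 1
    push_cast
    field_simp
  rw [Finset.sum_congr rfl (fun t _ => hterm t)]
  -- convert Icc to Ico of length T = γ'*γ
  have hToddZ : (T : ℤ) % 2 = 1 := by exact_mod_cast (Nat.odd_iff.mp hT)
  have hTZ : ((γ' * γ : ℕ) : ℤ) = (T : ℤ) := by exact_mod_cast hTeq
  have hIcc : Finset.Icc (-(((T : ℤ) - 1) / 2)) (((T : ℤ) - 1) / 2)
      = Finset.Ico (-(((T : ℤ) - 1) / 2)) ((-(((T : ℤ) - 1) / 2)) + ((γ' * γ : ℕ) : ℤ)) := by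
    ext x
    simp only [Finset.mem_Icc, Finset.mem_Ico]
    omega
  rw [hIcc, sum_Ico_zmod_mul γ (fun x => g₀ (x * (h : ZMod γ))) γ' _,
    sum_mul_unit γ g₀ (h : ZMod γ) hu]
  -- now evaluate ∑ x : ZMod γ, g₀ x
  set m : ℕ := (γ - 1) / 2 with hmdef
  have hγm : γ = 2 * m + 1 := by
    have := Nat.odd_iff.mp hγodd
    omega
  have hsingle : ∑ x : ZMod γ, g₀ x
      = ∑ t ∈ Finset.Ico (-(m : ℤ)) ((-(m : ℤ)) + (γ : ℕ)), g₀ ((t : ZMod γ)) :=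
    (sum_Ico_zmod γ g₀ (-(m : ℤ))).symm
  have hIco2 : Finset.Ico (-(m : ℤ)) ((-(m : ℤ)) + ((γ : ℕ) : ℤ)) = Finset.Icc (-(m : ℤ)) (m : ℤ) := by
    ext x
    simp only [Finset.mem_Icc, Finset.mem_Ico]
    have : ((γ : ℕ) : ℤ) = 2 * (m : ℤ) + 1 := by exact_mod_cast hγm
    omega
  have hgt : ∀ t : ℤ, t ∈ Finset.Icc (-(m : ℤ)) (m : ℤ) → g₀ ((t : ZMod γ)) = Complex.exp (-2 * w * (t : ℂ)) := by
    intro t ht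
    simp only [Finset.mem_Icc] at ht
    have h1 : (((t : ZMod γ).val : ℤ)) = t % γ := ZMod.val_intCast t
    have h2 : Int.bmod (((t : ZMod γ).val : ℤ)) γ = Int.bmod t γ := by
      rw [h1]; exact bmod_congr' γ (Int.emod_emod_of_dvd t dvd_rfl)
    have h3 : Int.bmod t γ = t := by
      apply bmod_eq_self' γ hγpos
      · have : ((γ : ℕ) : ℤ) = 2 * (m : ℤ) + 1 := by exact_mod_cast hγm
        omega
      · have : ((γ : ℕ) : ℤ) = 2 * (m : ℤ) + 1 := by exact_mod_cast hγm
        omega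
    rw [hg₀def]
    simp only
    rw [h2, h3]
  rw [hsingle, hIco2, Finset.sum_congr rfl hgt, geom_sinh w hw m]
  have hfin : ((2 * m + 1 : ℕ) : ℂ) = (γ : ℂ) := by exact_mod_cast hγm.symm
  rw [hfin, mul_div_assoc]
end

section
/- Let d ∈ 1/2 + ℤ and let δ be real with |δ| ≤ 1. There is a constant C = C(d,δ) > 0 such that in the circle-method setup, for every B > 0 and every continuous function E on {k/n − ikφ : φ ∈ [−ϑ', ϑ'']} satisfying |E(z)| ≤ B for all such z: |∫_{−ϑ'}^{ϑ''} z^d·e^{(πz/k)(2n+δ)}·E(z) dφ| ≤ C·B·(1/(k√n))·(n/k)^{|d|}. -/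
open Complex Real

set_option maxHeartbeats 1000000 in
/-- Integrating a uniformly bounded continuous function against `z^d·e^{(πz/k)(2n+δ)}`
over a circle-method arc gives `O(B·(1/(k√n))·(n/k)^{|d|})`. -/
theorem circle_integral_bounded_error (d : ℝ) (hd : ∃ m : ℤ, d = m + 1 / 2)
    (δ : ℝ) (hδ : |δ| ≤ 1) :
    ∃ C > 0, ∀ n : ℕ, 2 ≤ n → ∀ k : ℕ, 1 ≤ k → k ≤ Nat.sqrt n →
      ∀ ϑ₁ ϑ₂ : ℝ,
        1 / (2 * k * (Nat.sqrt n : ℝ)) ≤ ϑ₁ → ϑ₁ ≤ 1 / (k * (Nat.sqrt n : ℝ)) →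
        1 / (2 * k * (Nat.sqrt n : ℝ)) ≤ ϑ₂ → ϑ₂ ≤ 1 / (k * (Nat.sqrt n : ℝ)) →
        ∀ B : ℝ, 0 < B → ∀ E : ℂ → ℂ,
          ContinuousOn E ((fun φ : ℝ => (k : ℂ) / n - I * k * φ) '' Set.Icc (-ϑ₁) ϑ₂) →
          (∀ w ∈ (fun φ : ℝ => (k : ℂ) / n - I * k * φ) '' Set.Icc (-ϑ₁) ϑ₂,
            ‖E w‖ ≤ B) →
          ‖(∫ φ : ℝ in (-ϑ₁)..ϑ₂,
                ((k : ℂ) / n - I * k * φ) ^ (d : ℂ) *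
                  Complex.exp (π * ((k : ℂ) / n - I * k * φ) / k * (2 * n + δ)) *
                  E ((k : ℂ) / n - I * k * φ))‖ ≤
            C * B * (1 / (k * Real.sqrt n)) * ((n : ℝ) / k) ^ |d| := by
  refine ⟨4 * 2 ^ |d| * Real.exp (3 * π), by positivity, ?_⟩
  intro n hn k hk hkN ϑ₁ ϑ₂ hϑ₁l hϑ₁u hϑ₂l hϑ₂u B hB E _hE hEB
  have hδ1 : δ ≤ 1 := (abs_le.mp hδ).2
  set N := Nat.sqrt n with hNdef
  have hN1 : 1 ≤ N := Nat.sqrt_pos.mpr (by omega)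
  have hNR : (1 : ℝ) ≤ N := by exact_mod_cast hN1
  have hkR : (1 : ℝ) ≤ k := by exact_mod_cast hk
  have hnR : (2 : ℝ) ≤ n := by exact_mod_cast hn
  have hkNR : (k : ℝ) ≤ N := by exact_mod_cast hkN
  have hNN : (N : ℝ) * N ≤ n := by
    have h : N * N ≤ n := by have := Nat.sqrt_le' n; nlinarith [this]
    exact_mod_cast h
  have hn4 : (n : ℝ) ≤ 4 * (N * N) := by
    have h := Nat.lt_succ_sqrt n
    have h' : (n : ℝ) < (N + 1) * (N + 1) := by exact_mod_cast h
    nlinarith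
  have hnpos : (0 : ℝ) < n := by linarith
  have hkpos : (0 : ℝ) < k := by linarith
  have hNpos : (0 : ℝ) < N := by linarith
  have hs := Real.sqrt_nonneg (n : ℝ)
  have hs2 : Real.sqrt n ^ 2 = n := Real.sq_sqrt hnpos.le
  have hspos : (0 : ℝ) < Real.sqrt n := Real.sqrt_pos.mpr hnpos
  have hsle : Real.sqrt n ≤ 2 * N := by nlinarith
  have hϑ₁pos : 0 < ϑ₁ := lt_of_lt_of_le (by positivity) hϑ₁l
  have hϑ₂pos : 0 < ϑ₂ := lt_of_lt_of_le (by positivity) hϑ₂l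
  set M : ℝ := 2 ^ |d| * ((n : ℝ) / k) ^ |d| * Real.exp (3 * π) * B with hM
  have hnk1 : (1 : ℝ) ≤ (n : ℝ) / k := by
    rw [le_div_iff₀ hkpos]; nlinarith
  have hMpos : 0 < M := by
    have : (0:ℝ) < ((n : ℝ) / k) ^ |d| := Real.rpow_pos_of_pos (by positivity) _
    positivity
  -- pointwise bound
  have key : ∀ φ ∈ Set.uIoc (-ϑ₁) ϑ₂,
      ‖((k : ℂ) / n - I * k * φ) ^ (d : ℂ) *
        Complex.exp (π * ((k : ℂ) / n - I * k * φ) / k * (2 * n + δ)) *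
        E ((k : ℂ) / n - I * k * φ)‖ ≤ M := by
    intro φ hφ
    rw [Set.uIoc_of_le (by linarith : -ϑ₁ ≤ ϑ₂)] at hφ
    have hφIcc : φ ∈ Set.Icc (-ϑ₁) ϑ₂ := ⟨hφ.1.le, hφ.2⟩
    have hφabs : |φ| ≤ 1 / (k * N) := by
      rw [abs_le]
      constructor
      · have : -(1 / (k * N)) ≤ -ϑ₁ := by linarith
        linarith [hφ.1.le]
      · linarith [hφ.2]
    set z : ℂ := (k : ℂ) / n - I * k * φ with hz
    have hzre : z.re = (k : ℝ) / n := by simp [hz]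
    have hzne : z ≠ 0 := by
      intro h
      have h0 : (k : ℝ) / n = 0 := by rw [← hzre, h, Complex.zero_re]
      have : (0:ℝ) < (k:ℝ)/n := by positivity
      linarith
    have hzlow : (k : ℝ) / n ≤ ‖z‖ := by
      have := Complex.abs_re_le_norm z
      rw [hzre] at this
      calc (k:ℝ)/n = |(k:ℝ)/n| := (abs_of_pos (by positivity)).symm
        _ ≤ _ := this
    have hzup : ‖z‖ ≤ 2 / N := by
      have h1 : ‖(k : ℂ) / n‖ = (k : ℝ) / n := by
        rw [norm_div]; simp
      have h2 : ‖I * k * φ‖ = (k : ℝ) * |φ| := by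
        rw [norm_mul, norm_mul]; simp
      have hb : ‖z‖ ≤ (k:ℝ)/n + (k:ℝ) * |φ| := by
        calc ‖z‖ ≤ ‖(k : ℂ) / n‖ + ‖I * k * φ‖ :=
              norm_sub_le _ _
          _ = (k:ℝ)/n + (k:ℝ) * |φ| := by rw [h1, h2]
      have hkn : (k : ℝ) / n ≤ 1 / N := by
        rw [div_le_div_iff₀ hnpos hNpos]; nlinarith
      have hkφ : (k : ℝ) * |φ| ≤ 1 / N := by
        have : (k : ℝ) * |φ| ≤ k * (1 / (k * N)) :=
          mul_le_mul_of_nonneg_left hφabs hkpos.le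
        calc (k:ℝ) * |φ| ≤ k * (1 / (k*N)) := this
          _ = 1 / N := by field_simp
      calc ‖z‖ ≤ (k:ℝ)/n + (k:ℝ)*|φ| := hb
        _ ≤ 1/N + 1/N := by linarith
        _ = 2/N := by ring
    -- cpow bound
    have hcpow : ‖z ^ (d : ℂ)‖ ≤ 2 ^ |d| * ((n : ℝ) / k) ^ |d| := by
      rw [Complex.norm_cpow_of_ne_zero hzne]
      simp only [Complex.ofReal_re, Complex.ofReal_im, mul_zero, Real.exp_zero, div_one]
      rcases le_or_gt 0 d with hd0 | hd0
      · have h2 : ‖z‖ ≤ 2 := by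
          calc ‖z‖ ≤ 2 / N := hzup
            _ ≤ 2 := by
              rw [div_le_iff₀ hNpos]; nlinarith
        have h4 : ‖z‖ ^ d ≤ 2 ^ d :=
          Real.rpow_le_rpow (norm_nonneg z) h2 hd0
        have h3 : (1:ℝ) ≤ ((n : ℝ) / k) ^ d := Real.one_le_rpow hnk1 hd0
        rw [_root_.abs_of_nonneg hd0]
        calc ‖z‖ ^ d ≤ 2 ^ d := h4
          _ ≤ 2 ^ d * ((n:ℝ)/k) ^ d :=
            le_mul_of_one_le_right (Real.rpow_nonneg (by norm_num) d) h3
      · have h1 : ‖z‖ ^ d ≤ ((k:ℝ)/n) ^ d :=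
          Real.rpow_le_rpow_of_nonpos (by positivity) hzlow hd0.le
        have h2 : ((n:ℝ)/k) ^ |d| = ((k:ℝ)/n) ^ d := by
          rw [_root_.abs_of_neg hd0, Real.rpow_neg (by positivity),
            ← Real.inv_rpow (by positivity), inv_div]
        have h3 : (1:ℝ) ≤ (2:ℝ) ^ |d| := Real.one_le_rpow one_le_two (abs_nonneg d)
        calc ‖z‖ ^ d ≤ ((k:ℝ)/n) ^ d := h1
          _ = ((n:ℝ)/k) ^ |d| := h2.symm
          _ ≤ 2 ^ |d| * ((n:ℝ)/k) ^ |d| :=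
            le_mul_of_one_le_left (Real.rpow_nonneg (by positivity) _) h3
    -- exp bound
    have hexp : ‖Complex.exp (↑π * z / k * (2 * n + δ))‖ ≤ Real.exp (3 * π) := by
      have hkC : (k : ℂ) ≠ 0 := by exact_mod_cast hkpos.ne'
      have hnC : (n : ℂ) ≠ 0 := by exact_mod_cast hnpos.ne'
      have harg : ↑π * z / k * (2 * n + δ) =
          ((π * (2 * n + δ) / n : ℝ) : ℂ) + ((-(π * φ * (2 * n + δ)) : ℝ) : ℂ) * I := by
        rw [hz]; push_cast; field_simp; ring
      rw [harg, Complex.norm_exp]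
      have : (((π * (2 * n + δ) / n : ℝ) : ℂ) + ((-(π * φ * (2 * n + δ)) : ℝ) : ℂ) * I).re
          = π * (2 * n + δ) / n := by simp
      rw [this, Real.exp_le_exp]
      rw [div_le_iff₀ hnpos]
      nlinarith [Real.pi_pos]
    have hEb : ‖E z‖ ≤ B := by
      apply hEB
      exact ⟨φ, hφIcc, rfl⟩
    rw [norm_mul, norm_mul, hM]
    have h0 : (0:ℝ) ≤ ‖z ^ (d:ℂ)‖ := norm_nonneg _
    have h1 : (0:ℝ) ≤ ‖Complex.exp (↑π * z / k * (2 * n + δ))‖ := norm_nonneg _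
    have h2 : (0:ℝ) ≤ ‖E z‖ := norm_nonneg _
    calc ‖z ^ (d:ℂ)‖ * ‖Complex.exp (↑π * z / k * (2 * n + δ))‖ *
          ‖E z‖
        ≤ (2 ^ |d| * ((n : ℝ) / k) ^ |d|) * Real.exp (3 * π) * B := by
          apply mul_le_mul _ hEb h2 (by positivity)
          exact mul_le_mul hcpow hexp h1 (by positivity)
      _ = M := by rw [hM]
  have hint := intervalIntegral.norm_integral_le_of_norm_le_const key
  have hlen : |ϑ₂ - (-ϑ₁)| ≤ 2 / (k * N) := by
    rw [_root_.abs_of_nonneg (by linarith)]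
    have : 2 / ((k:ℝ) * N) = 1/(k*N) + 1/(k*N) := by ring
    linarith
  have hfinal : M * |ϑ₂ - (-ϑ₁)| ≤ M * (4 / (k * Real.sqrt n)) := by
    apply mul_le_mul_of_nonneg_left _ hMpos.le
    calc |ϑ₂ - (-ϑ₁)| ≤ 2 / (k * N) := hlen
      _ ≤ 4 / (k * Real.sqrt n) := by
        rw [div_le_div_iff₀ (by positivity) (by positivity)]
        nlinarith
  calc ‖_‖ ≤ M * |ϑ₂ - (-ϑ₁)| := hint
    _ ≤ M * (4 / (k * Real.sqrt n)) := hfinal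
    _ = 4 * 2 ^ |d| * Real.exp (3*π) * B * (1 / (k * Real.sqrt n)) * ((n : ℝ) / k) ^ |d| := by
        rw [hM]; field_simp
end

section
/- Let T be an odd positive integer, c an integer with c ≥ 0, α, ρ real with |α| < 1/2 and |ρ| ≤ (T−1)/(2T), γ real with 0 < γ ≤ T, β > 0 real, δ real with |δ| ≤ 1, d ∈ 1/2 + ℤ, and set λ := √β·γ/√T. There is a constant C = C(c,d,T,α,β,γ,δ,ρ) > 0 such that in the circle-method setup: |∫_{ϑ''}^{1/(kN)} z^d·e^{(πz/k)(2n+δ)}·λ·(∫_{−1}^{1} (λx+iρ)^c·e^{−πβ(x²−1)/(kz) + 2πλαx}/cosh(π(λx+iρ)) dx) dφ| ≤ C·(1/(k√n))·(n/k)^{|d|}, where z := k/n − ikφ; and the same bound holds for the integral over φ ∈ [−1/(kN), −ϑ']. -/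
open Complex Real

lemma cosh_re_eq (a b : ℝ) : (Complex.cosh (↑a + ↑b * I)).re = Real.cosh a * Real.cos b := by
  rw [Complex.cosh_add, Complex.cosh_mul_I, Complex.sinh_mul_I]
  simp [← Complex.ofReal_cosh, ← Complex.ofReal_sinh, ← Complex.ofReal_cos, ← Complex.ofReal_sin]

lemma cosh_lower (a b r : ℝ) (hb : |b| ≤ r) (hr : r < π / 2) (hr0 : 0 ≤ r) :
    Real.cos r ≤ ‖Complex.cosh (↑a + ↑b * I)‖ := by
  calc Real.cos r ≤ Real.cos |b| := by
        apply Real.cos_le_cos_of_nonneg_of_le_pi (abs_nonneg b) (by linarith [Real.pi_pos]) hb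
    _ = Real.cos b := by rw [Real.cos_abs]
    _ ≤ Real.cosh a * Real.cos b := by
        nlinarith [Real.one_le_cosh a, Real.cos_le_one b, Real.neg_one_le_cos b,
          Real.cos_nonneg_of_mem_Icc (x := b) ⟨by cases abs_le.1 hb; linarith, by cases abs_le.1 hb; linarith⟩]
    _ ≤ |(Complex.cosh (↑a + ↑b * I)).re| := by rw [cosh_re_eq]; exact le_abs_self _
    _ ≤ ‖Complex.cosh (↑a + ↑b * I)‖ := Complex.abs_re_le_norm _

lemma rpow_tail_bound (x m M d : ℝ) (hm : 0 < m) (hmx : m ≤ x) (hxM : x ≤ M)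
    (hM : 1 ≤ M) (hm1 : m ≤ 1) : x ^ d ≤ M ^ |d| * m⁻¹ ^ |d| := by
  have hx0 : 0 < x := lt_of_lt_of_le hm hmx
  rcases le_or_gt 0 d with hd | hd
  · rw [_root_.abs_of_nonneg hd]
    calc x ^ d ≤ M ^ d := Real.rpow_le_rpow hx0.le hxM hd
      _ = M ^ d * 1 := (mul_one _).symm
      _ ≤ M ^ d * m⁻¹ ^ d := by
          refine mul_le_mul_of_nonneg_left ?_ (Real.rpow_nonneg (by linarith) d)
          exact Real.one_le_rpow (by rw [le_inv_comm₀ one_pos hm]; simpa using hm1) hd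
  · rw [abs_of_neg hd]
    have : x ^ d = (x⁻¹) ^ (-d) := by
      rw [Real.inv_rpow hx0.le, ← Real.rpow_neg hx0.le, neg_neg]
    rw [this]
    calc (x⁻¹) ^ (-d) ≤ (m⁻¹) ^ (-d) := by
          apply Real.rpow_le_rpow (by positivity) (by exact inv_anti₀ hm hmx) (by linarith)
      _ = 1 * (m⁻¹) ^ (-d) := (one_mul _).symm
      _ ≤ M ^ (-d) * (m⁻¹) ^ (-d) := by
          refine mul_le_mul_of_nonneg_right ?_ (Real.rpow_nonneg (by positivity) _)
          exact Real.one_le_rpow hM (by linarith)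

lemma mk_re (a b : ℝ) : ((a : ℂ) + (b : ℂ) * I).re = a := by simp
lemma mk_im (a b : ℝ) : ((a : ℂ) + (b : ℂ) * I).im = b := by simp
lemma mk_normSq (a b : ℝ) : Complex.normSq ((a : ℂ) + (b : ℂ) * I) = a ^ 2 + b ^ 2 := by
  simp [Complex.normSq_apply]; ring


set_option maxHeartbeats 1000000 in
lemma inner_pt_bound (T : ℕ) (hTpos : 0 < T) (c : ℕ) (α ρ : ℝ) (hα : |α| < 1 / 2)
    (hρ : |ρ| ≤ ((T : ℝ) - 1) / (2 * T)) (γ β : ℝ) (hγ : 0 < γ) (hγT : γ ≤ (T : ℝ)) (hβ : 0 < β)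
    (n k : ℕ) (hn : 2 ≤ n) (hk : 1 ≤ k) (hkN : k ≤ Nat.sqrt n)
    (φ : ℝ) (hφ1 : 1 / (2 * k * (Nat.sqrt n : ℝ)) ≤ |φ|) (x : ℝ) (hx : |x| ≤ 1) :
    ‖((((Real.sqrt β * γ / Real.sqrt T : ℝ) : ℂ) * x + I * ρ) ^ c *
        Complex.exp (-(π : ℂ) * β * ((x : ℂ) ^ 2 - 1) /
            (k * ((k : ℂ) / n - I * k * φ)) +
          2 * π * (Real.sqrt β * γ / Real.sqrt T : ℝ) * α * x) /
      Complex.cosh (π * (((Real.sqrt β * γ / Real.sqrt T : ℝ) : ℂ) * x + I * ρ)))‖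
    ≤ (Real.sqrt β * γ / Real.sqrt T + 1) ^ c *
        Real.exp (π * (4 * β + 2 * (Real.sqrt β * γ / Real.sqrt T))) /
        Real.cos (π * (((T : ℝ) - 1) / (2 * T))) := by
  set lam : ℝ := Real.sqrt β * γ / Real.sqrt T with hlam
  have hT1 : (1 : ℝ) ≤ T := by exact_mod_cast hTpos
  have hlam0 : 0 < lam := by
    apply div_pos (mul_pos (Real.sqrt_pos.2 hβ) hγ) (Real.sqrt_pos.2 (by linarith))
  have hρ1 : |ρ| ≤ 1 := le_trans hρ (by rw [div_le_one (by linarith)]; linarith)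
  have hk0 : (0 : ℝ) < k := by exact_mod_cast hk
  have hn0 : (0 : ℝ) < n := by positivity
  have hN1 : 1 ≤ Nat.sqrt n := le_trans hk hkN
  have hN0 : (0 : ℝ) < (Nat.sqrt n : ℝ) := by exact_mod_cast hN1
  have hNsq : ((Nat.sqrt n : ℝ)) ^ 2 ≤ (n : ℝ) := by
    exact_mod_cast Nat.sqrt_le' n
  have hr0 : 0 ≤ ((T : ℝ) - 1) / (2 * T) := div_nonneg (by linarith) (by linarith)
  have hrhalf : ((T : ℝ) - 1) / (2 * T) < 1 / 2 := by
    rw [div_lt_iff₀ (by linarith)]; linarith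
  have hrlt : π * (((T : ℝ) - 1) / (2 * T)) < π / 2 := by
    nlinarith [Real.pi_pos]
  have hcosr : 0 < Real.cos (π * (((T : ℝ) - 1) / (2 * T))) := by
    apply Real.cos_pos_of_mem_Ioo
    refine ⟨?_, hrlt⟩
    nlinarith [Real.pi_pos]
  have h1 : ‖(((lam : ℝ) : ℂ) * x + I * ρ) ^ c‖ ≤ (lam + 1) ^ c := by
    rw [norm_pow]
    apply pow_le_pow_left₀ (norm_nonneg _)
    calc ‖((lam : ℝ) : ℂ) * x + I * ρ‖ ≤
        ‖((lam : ℝ) : ℂ) * x‖ + ‖I * ρ‖ := norm_add_le _ _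
      _ = |lam * x| + |ρ| := by simp [abs_mul]
      _ ≤ lam + 1 := by
          rw [abs_mul, _root_.abs_of_nonneg hlam0.le]
          nlinarith [abs_nonneg ρ]
  have h2 : ‖Complex.exp (-(π : ℂ) * β * ((x : ℂ) ^ 2 - 1) /
        (k * ((k : ℂ) / n - I * k * φ)) + 2 * π * ((lam : ℝ) : ℂ) * α * x)‖
      ≤ Real.exp (π * (4 * β + 2 * lam)) := by
    rw [Complex.norm_exp]
    apply Real.exp_le_exp.2
    have hzero : ((k : ℂ) * ((k : ℂ) / n - I * k * φ)) =
        ((((k : ℝ) ^ 2 / n : ℝ)) : ℂ) + ((-((k:ℝ) ^ 2 * φ) : ℝ) : ℂ) * I := by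
      push_cast; ring
    have heq : -(π : ℂ) * β * ((x : ℂ) ^ 2 - 1) / (k * ((k : ℂ) / n - I * k * φ)) +
          2 * π * ((lam : ℝ) : ℂ) * α * x =
        ((π * β * (1 - x ^ 2) : ℝ) : ℂ) *
          ((((k : ℝ) ^ 2 / n : ℝ) : ℂ) + ((-((k:ℝ) ^ 2 * φ) : ℝ) : ℂ) * I)⁻¹
          + ((2 * π * lam * α * x : ℝ) : ℂ) := by
      rw [← hzero]
      push_cast
      rw [div_eq_mul_inv]
      ring
    rw [heq, Complex.add_re, Complex.re_ofReal_mul, Complex.ofReal_re]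
    have hinv_re : ((((k : ℝ) ^ 2 / n : ℝ) : ℂ) + ((-((k:ℝ) ^ 2 * φ) : ℝ) : ℂ) * I)⁻¹.re =
        ((k : ℝ) ^ 2 / n) / (((k : ℝ) ^ 2 / n) ^ 2 + ((k : ℝ) ^ 2 * φ) ^ 2) := by
      rw [Complex.inv_re, mk_re, mk_normSq]
      ring_nf
    rw [hinv_re]
    set K : ℝ := (k : ℝ)
    set N : ℝ := (Nat.sqrt n : ℝ)
    have hφsq : (1 / (2 * K * N)) ^ 2 ≤ φ ^ 2 := by
      rw [← _root_.sq_abs φ]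
      exact pow_le_pow_left₀ (by positivity) hφ1 2
    have hA : K ^ 2 / (4 * (n : ℝ)) ≤ (K ^ 2 * φ) ^ 2 := by
      have e : K ^ 4 * (1 / (2 * K * N)) ^ 2 = K ^ 2 / (4 * N ^ 2) := by
        field_simp; ring
      have h5 : K ^ 2 / (4 * N ^ 2) ≤ K ^ 4 * φ ^ 2 := by
        rw [← e]; exact mul_le_mul_of_nonneg_left hφsq (by positivity)
      have h6 : K ^ 2 / (4 * (n : ℝ)) ≤ K ^ 2 / (4 * N ^ 2) :=
        div_le_div_of_nonneg_left (by positivity) (by positivity) (by linarith)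
      nlinarith
    have hdenom : (K ^ 2 / n) / ((K ^ 2 / n) ^ 2 + (K ^ 2 * φ) ^ 2) ≤ 4 := by
      rw [div_le_iff₀ (by positivity)]
      have : K ^ 2 / n ≤ 4 * (K ^ 2 * φ) ^ 2 := by
        have h7 : K ^ 2 / n = 4 * (K ^ 2 / (4 * (n : ℝ))) := by field_simp
        linarith [mul_le_mul_of_nonneg_left hA (by norm_num : (0:ℝ) ≤ 4)]
      nlinarith [sq_nonneg (K ^ 2 / n)]
    have hd0 : 0 ≤ (K ^ 2 / n) / ((K ^ 2 / n) ^ 2 + (K ^ 2 * φ) ^ 2) := by positivity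
    have hx2 : x ^ 2 ≤ 1 := by rw [← _root_.sq_abs x]; nlinarith [abs_nonneg x]
    have hs0 : 0 ≤ π * β * (1 - x ^ 2) :=
      mul_nonneg (mul_nonneg Real.pi_pos.le hβ.le) (by linarith)
    have hs1 : π * β * (1 - x ^ 2) ≤ π * β := by nlinarith [mul_nonneg (mul_nonneg Real.pi_pos.le hβ.le) (sq_nonneg x)]
    have hα2 : 2 * π * lam * α * x ≤ π * lam := by
      have habs : |2 * π * lam * α * x| ≤ 2 * π * lam * (1/2) * 1 := by
        rw [abs_mul, abs_mul, abs_mul, abs_mul]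
        rw [_root_.abs_of_nonneg (by norm_num : (0:ℝ) ≤ (2:ℝ)),
          _root_.abs_of_nonneg Real.pi_pos.le, _root_.abs_of_nonneg hlam0.le]
        apply mul_le_mul (mul_le_mul le_rfl hα.le (abs_nonneg α) (by positivity)) hx
          (abs_nonneg x) (by positivity)
      nlinarith [le_abs_self (2 * π * lam * α * x)]
    nlinarith [mul_le_mul hs1 hdenom hd0 (by positivity : (0:ℝ) ≤ π * β)]
  have h3 : Real.cos (π * (((T : ℝ) - 1) / (2 * T))) ≤
      ‖Complex.cosh (π * (((lam : ℝ) : ℂ) * x + I * ρ))‖ := by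
    have e : (π : ℂ) * (((lam : ℝ) : ℂ) * x + I * ρ) =
        (((π * lam * x : ℝ)) : ℂ) + ((π * ρ : ℝ) : ℂ) * I := by push_cast; ring
    rw [e]
    apply cosh_lower
    · rw [abs_mul, _root_.abs_of_nonneg Real.pi_pos.le]
      exact mul_le_mul_of_nonneg_left hρ Real.pi_pos.le
    · exact hrlt
    · exact mul_nonneg Real.pi_pos.le hr0
  rw [norm_div, norm_mul]
  apply div_le_div₀ (by positivity) _ hcosr h3
  exact mul_le_mul h1 h2 (norm_nonneg _) (by positivity)


set_option maxHeartbeats 1000000 in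
lemma outer_pt_bound (T : ℕ) (hTpos : 0 < T) (c : ℕ) (α ρ : ℝ) (hα : |α| < 1 / 2)
    (hρ : |ρ| ≤ ((T : ℝ) - 1) / (2 * T)) (γ β : ℝ) (hγ : 0 < γ) (hγT : γ ≤ (T : ℝ)) (hβ : 0 < β)
    (δ : ℝ) (hδ : |δ| ≤ 1) (d : ℝ)
    (n k : ℕ) (hn : 2 ≤ n) (hk : 1 ≤ k) (hkN : k ≤ Nat.sqrt n)
    (φ : ℝ) (hφ1 : 1 / (2 * k * (Nat.sqrt n : ℝ)) ≤ |φ|)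
    (hφ2 : |φ| ≤ 1 / (k * (Nat.sqrt n : ℝ))) :
    ‖
        (((k : ℂ) / n - I * k * φ) ^ (d : ℂ) *
          Complex.exp (π * ((k : ℂ) / n - I * k * φ) / k * (2 * n + δ)) *
          ((Real.sqrt β * γ / Real.sqrt T : ℝ) *
            ∫ x : ℝ in (-1 : ℝ)..1,
              (((Real.sqrt β * γ / Real.sqrt T : ℝ) : ℂ) * x + I * ρ) ^ c *
                  Complex.exp (-(π : ℂ) * β * ((x : ℂ) ^ 2 - 1) /
                      (k * ((k : ℂ) / n - I * k * φ)) +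
                    2 * π * (Real.sqrt β * γ / Real.sqrt T : ℝ) * α * x) /
                Complex.cosh (π *
                  (((Real.sqrt β * γ / Real.sqrt T : ℝ) : ℂ) * x + I * ρ))))‖ ≤
      ((2 : ℝ) ^ |d| * Real.exp (3 * π) * (Real.sqrt β * γ / Real.sqrt T) *
          (2 * ((Real.sqrt β * γ / Real.sqrt T + 1) ^ c *
            Real.exp (π * (4 * β + 2 * (Real.sqrt β * γ / Real.sqrt T))) /
            Real.cos (π * (((T : ℝ) - 1) / (2 * T)))))) * ((n : ℝ) / k) ^ |d| := by
  set lam : ℝ := Real.sqrt β * γ / Real.sqrt T with hlam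
  have hT1 : (1 : ℝ) ≤ T := by exact_mod_cast hTpos
  have hlam0 : 0 < lam :=
    div_pos (mul_pos (Real.sqrt_pos.2 hβ) hγ) (Real.sqrt_pos.2 (by linarith))
  have hk0 : (0 : ℝ) < k := by exact_mod_cast hk
  have hn0 : (0 : ℝ) < n := by positivity
  have hn2 : (2 : ℝ) ≤ n := by exact_mod_cast hn
  have hN1 : 1 ≤ Nat.sqrt n := le_trans hk hkN
  have hN0 : (0 : ℝ) < (Nat.sqrt n : ℝ) := by exact_mod_cast hN1
  have hkn : (k : ℝ) ≤ n := by
    exact_mod_cast le_trans hkN (Nat.sqrt_le_self n)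
  have hkN' : (k : ℝ) ≤ (Nat.sqrt n : ℝ) := by exact_mod_cast hkN
  set z : ℂ := (k : ℂ) / n - I * k * φ with hz
  have hzre : z.re = (k : ℝ) / n := by
    have : z = (((k : ℝ) / n : ℝ) : ℂ) + ((-((k:ℝ) * φ) : ℝ) : ℂ) * I := by
      rw [hz]; push_cast; ring
    rw [this, mk_re]
  have hzim : z.im = -((k:ℝ) * φ) := by
    have : z = (((k : ℝ) / n : ℝ) : ℂ) + ((-((k:ℝ) * φ) : ℝ) : ℂ) * I := by
      rw [hz]; push_cast; ring
    rw [this, mk_im]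
  have habs_lb : (k : ℝ) / n ≤ ‖z‖ := by
    rw [← hzre]; exact Complex.re_le_norm z
  have habs_ub : ‖z‖ ≤ 2 := by
    refine le_trans (Complex.norm_le_abs_re_add_abs_im z) ?_
    rw [hzre, hzim]
    have e1 : |(k : ℝ) / n| ≤ 1 := by
      rw [_root_.abs_of_nonneg (by positivity)]
      rw [div_le_one hn0]; exact hkn
    have e2 : |(-((k:ℝ) * φ))| ≤ 1 := by
      rw [abs_neg, abs_mul, _root_.abs_of_nonneg hk0.le]
      calc (k : ℝ) * |φ| ≤ (k : ℝ) * (1 / (k * (Nat.sqrt n : ℝ))) :=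
            mul_le_mul_of_nonneg_left hφ2 hk0.le
        _ = 1 / (Nat.sqrt n : ℝ) := by field_simp
        _ ≤ 1 := by rw [div_le_one hN0]; exact_mod_cast hN1
    linarith
  -- cpow bound
  have h1 : ‖z ^ (d : ℂ)‖ ≤ (2:ℝ) ^ |d| * ((n : ℝ) / k) ^ |d| := by
    rw [Complex.norm_cpow_real]
    have := rpow_tail_bound ‖z‖ ((k:ℝ)/n) 2 d (by positivity) habs_lb habs_ub
      (by norm_num) (by rw [div_le_one hn0]; exact hkn)
    rwa [inv_div] at this
  -- exp bound
  have h2 : ‖Complex.exp (π * z / k * (2 * n + δ))‖ ≤ Real.exp (3 * π) := by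
    rw [Complex.norm_exp]
    apply Real.exp_le_exp.2
    have heq : (π : ℂ) * z / k * (2 * n + δ) =
        ((π * (2 * n + δ) / n : ℝ) : ℂ) + ((-(π * φ * (2 * n + δ)) : ℝ) : ℂ) * I := by
      rw [hz]
      have hkC : (k : ℂ) ≠ 0 := by exact_mod_cast hk0.ne'
      have hnC : (n : ℂ) ≠ 0 := by exact_mod_cast hn0.ne'
      push_cast
      field_simp
      ring
    rw [heq, mk_re]
    rw [div_le_iff₀ hn0]
    have : 2 * (n:ℝ) + δ ≤ 3 * n := by
      have := abs_le.1 hδ; linarith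
    nlinarith [Real.pi_pos]
  -- inner integral bound
  have h3 : ‖(∫ x : ℝ in (-1 : ℝ)..1,
        (((lam : ℝ) : ℂ) * x + I * ρ) ^ c *
            Complex.exp (-(π : ℂ) * β * ((x : ℂ) ^ 2 - 1) /
                (k * ((k : ℂ) / n - I * k * φ)) + 2 * π * ((lam : ℝ) : ℂ) * α * x) /
          Complex.cosh (π * (((lam : ℝ) : ℂ) * x + I * ρ)))‖
      ≤ ((lam + 1) ^ c * Real.exp (π * (4 * β + 2 * lam)) /
          Real.cos (π * (((T : ℝ) - 1) / (2 * T)))) * 2 := by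
    have := intervalIntegral.norm_integral_le_of_norm_le_const
      (C := (lam + 1) ^ c * Real.exp (π * (4 * β + 2 * lam)) /
        Real.cos (π * (((T : ℝ) - 1) / (2 * T))))
      (a := (-1 : ℝ)) (b := 1)
      (f := fun x : ℝ => (((lam : ℝ) : ℂ) * x + I * ρ) ^ c *
            Complex.exp (-(π : ℂ) * β * ((x : ℂ) ^ 2 - 1) /
                (k * ((k : ℂ) / n - I * k * φ)) + 2 * π * ((lam : ℝ) : ℂ) * α * x) /
          Complex.cosh (π * (((lam : ℝ) : ℂ) * x + I * ρ))) ?_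
    · refine le_trans this ?_
      rw [show |(1 : ℝ) - (-1)| = 2 by norm_num]
    · intro x hx
      rw [Set.uIoc_of_le (by norm_num : (-1:ℝ) ≤ 1)] at hx
      have hx1 : |x| ≤ 1 := abs_le.2 ⟨hx.1.le, hx.2⟩
      exact inner_pt_bound T hTpos c α ρ hα hρ γ β hγ hγT hβ n k hn hk hkN φ hφ1 x hx1
  rw [norm_mul, norm_mul, norm_mul, Complex.norm_real, Real.norm_eq_abs, _root_.abs_of_nonneg hlam0.le]
  have hfin := mul_le_mul (mul_le_mul h1 h2 (norm_nonneg _) (by positivity))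
    (mul_le_mul_of_nonneg_left h3 hlam0.le)
    (mul_nonneg hlam0.le (norm_nonneg _))
    (mul_nonneg (by positivity) (Real.exp_pos _).le)
  refine le_trans hfin (le_of_eq (by ring))

set_option maxHeartbeats 1000000 in
/-- The contributions of the two end pieces `[ϑ'', 1/(kN)]` and `[−1/(kN), −ϑ']` of the
symmetrized circle-method arc are `O((1/(k√n))·(n/k)^{|d|})`. -/
theorem circle_integral_tails (T : ℕ) (hT : Odd T) (hTpos : 0 < T)
    (c : ℕ) (α ρ : ℝ) (hα : |α| < 1 / 2) (hρ : |ρ| ≤ ((T : ℝ) - 1) / (2 * T))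
    (γ : ℝ) (hγ : 0 < γ) (hγT : γ ≤ T) (β : ℝ) (hβ : 0 < β) (δ : ℝ) (hδ : |δ| ≤ 1)
    (d : ℝ) (hd : ∃ m : ℤ, d = m + 1 / 2) :
    ∃ C > 0, ∀ n : ℕ, 2 ≤ n → ∀ k : ℕ, 1 ≤ k → k ≤ Nat.sqrt n →
      ∀ ϑ₁ ϑ₂ : ℝ,
        1 / (2 * k * (Nat.sqrt n : ℝ)) ≤ ϑ₁ → ϑ₁ ≤ 1 / (k * (Nat.sqrt n : ℝ)) →
        1 / (2 * k * (Nat.sqrt n : ℝ)) ≤ ϑ₂ → ϑ₂ ≤ 1 / (k * (Nat.sqrt n : ℝ)) →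
        ‖(∫ φ : ℝ in ϑ₂..(1 / (k * (Nat.sqrt n : ℝ))),
              ((k : ℂ) / n - I * k * φ) ^ (d : ℂ) *
                Complex.exp (π * ((k : ℂ) / n - I * k * φ) / k * (2 * n + δ)) *
                ((Real.sqrt β * γ / Real.sqrt T : ℝ) *
                  ∫ x : ℝ in (-1 : ℝ)..1,
                    (((Real.sqrt β * γ / Real.sqrt T : ℝ) : ℂ) * x + I * ρ) ^ c *
                        Complex.exp (-(π : ℂ) * β * ((x : ℂ) ^ 2 - 1) /
                            (k * ((k : ℂ) / n - I * k * φ)) +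
                          2 * π * (Real.sqrt β * γ / Real.sqrt T : ℝ) * α * x) /
                      Complex.cosh (π *
                        (((Real.sqrt β * γ / Real.sqrt T : ℝ) : ℂ) * x + I * ρ))))‖ ≤
          C * (1 / (k * Real.sqrt n)) * ((n : ℝ) / k) ^ |d| ∧
        ‖(∫ φ : ℝ in (-(1 / (k * (Nat.sqrt n : ℝ))))..(-ϑ₁),
              ((k : ℂ) / n - I * k * φ) ^ (d : ℂ) *
                Complex.exp (π * ((k : ℂ) / n - I * k * φ) / k * (2 * n + δ)) *
                ((Real.sqrt β * γ / Real.sqrt T : ℝ) *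
                  ∫ x : ℝ in (-1 : ℝ)..1,
                    (((Real.sqrt β * γ / Real.sqrt T : ℝ) : ℂ) * x + I * ρ) ^ c *
                        Complex.exp (-(π : ℂ) * β * ((x : ℂ) ^ 2 - 1) /
                            (k * ((k : ℂ) / n - I * k * φ)) +
                          2 * π * (Real.sqrt β * γ / Real.sqrt T : ℝ) * α * x) /
                      Complex.cosh (π *
                        (((Real.sqrt β * γ / Real.sqrt T : ℝ) : ℂ) * x + I * ρ))))‖ ≤
          C * (1 / (k * Real.sqrt n)) * ((n : ℝ) / k) ^ |d| := by
  set lam : ℝ := Real.sqrt β * γ / Real.sqrt T with hlam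
  have hT1 : (1 : ℝ) ≤ T := by exact_mod_cast hTpos
  have hlam0 : 0 < lam :=
    div_pos (mul_pos (Real.sqrt_pos.2 hβ) hγ) (Real.sqrt_pos.2 (by linarith))
  have hrhalf : ((T : ℝ) - 1) / (2 * T) < 1 / 2 := by
    rw [div_lt_iff₀ (by linarith)]; linarith
  have hr0 : 0 ≤ ((T : ℝ) - 1) / (2 * T) := div_nonneg (by linarith) (by linarith)
  have hcosr : 0 < Real.cos (π * (((T : ℝ) - 1) / (2 * T))) := by
    apply Real.cos_pos_of_mem_Ioo
    constructor
    · nlinarith [Real.pi_pos]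
    · nlinarith [Real.pi_pos]
  refine ⟨(2 : ℝ) ^ |d| * Real.exp (3 * π) * lam *
      (2 * ((lam + 1) ^ c * Real.exp (π * (4 * β + 2 * lam)) /
        Real.cos (π * (((T : ℝ) - 1) / (2 * T))))), by positivity, ?_⟩
  intro n hn k hk hkN ϑ₁ ϑ₂ hϑ₁l hϑ₁u hϑ₂l hϑ₂u
  set C1 : ℝ := (2 : ℝ) ^ |d| * Real.exp (3 * π) * lam *
      (2 * ((lam + 1) ^ c * Real.exp (π * (4 * β + 2 * lam)) /
        Real.cos (π * (((T : ℝ) - 1) / (2 * T))))) with hC1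
  have hC1pos : 0 < C1 := by rw [hC1]; positivity
  have hk0 : (0 : ℝ) < k := by exact_mod_cast hk
  have hN1 : 1 ≤ Nat.sqrt n := le_trans hk hkN
  have hN0 : (0 : ℝ) < (Nat.sqrt n : ℝ) := by exact_mod_cast hN1
  have hn0 : (0 : ℝ) < n := by positivity
  have hsqrtn : Real.sqrt (n : ℝ) ≤ 2 * (Nat.sqrt n : ℝ) := by
    rw [show (2 : ℝ) * (Nat.sqrt n : ℝ) = Real.sqrt ((2 * (Nat.sqrt n : ℝ)) ^ 2) from
      (Real.sqrt_sq (by positivity)).symm]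
    apply Real.sqrt_le_sqrt
    have h2 : (n : ℝ) < ((Nat.sqrt n : ℝ) + 1) ^ 2 := by
      exact_mod_cast Nat.lt_succ_sqrt' n
    have hN1' : (1 : ℝ) ≤ (Nat.sqrt n : ℝ) := by exact_mod_cast hN1
    nlinarith
  have hlen : 1 / ((k : ℝ) * (Nat.sqrt n : ℝ)) - 1 / (2 * k * (Nat.sqrt n : ℝ)) ≤
      1 / ((k : ℝ) * Real.sqrt n) := by
    have e1 : 1 / ((k : ℝ) * (Nat.sqrt n : ℝ)) - 1 / (2 * k * (Nat.sqrt n : ℝ)) =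
        1 / (2 * k * (Nat.sqrt n : ℝ)) := by field_simp; ring
    rw [e1]
    have hs0 : 0 < Real.sqrt (n : ℝ) := Real.sqrt_pos.2 hn0
    apply div_le_div_of_nonneg_left (by norm_num) (by positivity)
    calc (k : ℝ) * Real.sqrt n ≤ (k : ℝ) * (2 * (Nat.sqrt n : ℝ)) :=
          mul_le_mul_of_nonneg_left hsqrtn hk0.le
      _ = 2 * k * (Nat.sqrt n : ℝ) := by ring
  have hrpow0 : (0 : ℝ) ≤ ((n : ℝ) / k) ^ |d| := Real.rpow_nonneg (by positivity) _
  constructor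
  · -- first tail
    have hbd := intervalIntegral.norm_integral_le_of_norm_le_const
      (C := C1 * ((n : ℝ) / k) ^ |d|) (a := ϑ₂) (b := 1 / ((k : ℝ) * (Nat.sqrt n : ℝ)))
      (f := fun φ : ℝ =>
        ((k : ℂ) / n - I * k * φ) ^ (d : ℂ) *
          Complex.exp (π * ((k : ℂ) / n - I * k * φ) / k * (2 * n + δ)) *
          ((lam : ℝ) *
            ∫ x : ℝ in (-1 : ℝ)..1,
              (((lam : ℝ) : ℂ) * x + I * ρ) ^ c *
                  Complex.exp (-(π : ℂ) * β * ((x : ℂ) ^ 2 - 1) /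
                      (k * ((k : ℂ) / n - I * k * φ)) +
                    2 * π * ((lam : ℝ) : ℂ) * α * x) /
                Complex.cosh (π * (((lam : ℝ) : ℂ) * x + I * ρ)))) ?_
    · refine le_trans hbd ?_
      have hlen1 : |1 / ((k : ℝ) * (Nat.sqrt n : ℝ)) - ϑ₂| ≤ 1 / ((k : ℝ) * Real.sqrt n) := by
        rw [_root_.abs_of_nonneg (by linarith)]
        linarith
      calc C1 * ((n : ℝ) / k) ^ |d| * |1 / ((k : ℝ) * (Nat.sqrt n : ℝ)) - ϑ₂|
          ≤ C1 * ((n : ℝ) / k) ^ |d| * (1 / ((k : ℝ) * Real.sqrt n)) := by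
            apply mul_le_mul_of_nonneg_left hlen1 (by positivity)
        _ = C1 * (1 / ((k : ℝ) * Real.sqrt n)) * ((n : ℝ) / k) ^ |d| := by ring
    · intro φ hφ
      rw [Set.uIoc_of_le (by linarith)] at hφ
      have hφpos : 0 < φ := lt_trans (lt_of_lt_of_le (by positivity) hϑ₂l) hφ.1
      have hφ1 : 1 / (2 * k * (Nat.sqrt n : ℝ)) ≤ |φ| := by
        rw [_root_.abs_of_pos hφpos]; linarith [hφ.1]
      have hφ2 : |φ| ≤ 1 / ((k : ℝ) * (Nat.sqrt n : ℝ)) := by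
        rw [_root_.abs_of_pos hφpos]; exact hφ.2
      exact outer_pt_bound T hTpos c α ρ hα hρ γ β hγ hγT hβ δ hδ d n k hn hk hkN φ hφ1 hφ2
  · -- second tail
    have hbd := intervalIntegral.norm_integral_le_of_norm_le_const
      (C := C1 * ((n : ℝ) / k) ^ |d|) (a := -(1 / ((k : ℝ) * (Nat.sqrt n : ℝ)))) (b := -ϑ₁)
      (f := fun φ : ℝ =>
        ((k : ℂ) / n - I * k * φ) ^ (d : ℂ) *
          Complex.exp (π * ((k : ℂ) / n - I * k * φ) / k * (2 * n + δ)) *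
          ((lam : ℝ) *
            ∫ x : ℝ in (-1 : ℝ)..1,
              (((lam : ℝ) : ℂ) * x + I * ρ) ^ c *
                  Complex.exp (-(π : ℂ) * β * ((x : ℂ) ^ 2 - 1) /
                      (k * ((k : ℂ) / n - I * k * φ)) +
                    2 * π * ((lam : ℝ) : ℂ) * α * x) /
                Complex.cosh (π * (((lam : ℝ) : ℂ) * x + I * ρ)))) ?_
    · refine le_trans hbd ?_
      have hlen1 : |(-ϑ₁) - (-(1 / ((k : ℝ) * (Nat.sqrt n : ℝ))))| ≤
          1 / ((k : ℝ) * Real.sqrt n) := by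
        rw [_root_.abs_of_nonneg (by linarith)]
        linarith
      calc C1 * ((n : ℝ) / k) ^ |d| * |(-ϑ₁) - (-(1 / ((k : ℝ) * (Nat.sqrt n : ℝ))))|
          ≤ C1 * ((n : ℝ) / k) ^ |d| * (1 / ((k : ℝ) * Real.sqrt n)) := by
            apply mul_le_mul_of_nonneg_left hlen1 (by positivity)
        _ = C1 * (1 / ((k : ℝ) * Real.sqrt n)) * ((n : ℝ) / k) ^ |d| := by ring
    · intro φ hφ
      rw [Set.uIoc_of_le (by linarith)] at hφ
      have hφneg : φ < 0 := lt_of_le_of_lt hφ.2 (by linarith [lt_of_lt_of_le (by positivity : (0:ℝ) < 1 / (2 * k * (Nat.sqrt n : ℝ))) hϑ₁l])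
      have hφ1 : 1 / (2 * k * (Nat.sqrt n : ℝ)) ≤ |φ| := by
        rw [abs_of_neg hφneg]; linarith [hφ.2]
      have hφ2 : |φ| ≤ 1 / ((k : ℝ) * (Nat.sqrt n : ℝ)) := by
        rw [abs_of_neg hφneg]; linarith [hφ.1]
      exact outer_pt_bound T hTpos c α ρ hα hρ γ β hγ hγT hβ δ hδ d n k hn hk hkN φ hφ1 hφ2
end

section
/- Let β > 0 and δ be real with |δ| ≤ 1, and let d ∈ 1/2 + ℤ. There is a constant C = C(d,β,δ) > 0 such that for all integers n ≥ 2, N := ⌊√n⌋, all integers k with 1 ≤ k ≤ N, and uniformly for all x ∈ [−1,1]: (1/k)·|∫_{−k/n}^{k/n} (s + i/N)^d·e^{(π/k)(2n+δ)(s + i/N)}·e^{πβ(1−x²)/(k(s + i/N))} ds| ≤ C·(1/(k√n))·(n/k)^{|d|}, where (s+i/N)^d is the principal branch; the same bound holds with i/N replaced by −i/N. -/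
open Complex Real

set_option maxHeartbeats 1000000 in
lemma pointwise_bound (β δ d x : ℝ) (hβ : 0 < β) (hδ : |δ| ≤ 1)
    (hx : x ∈ Set.Icc (-1 : ℝ) 1) (n k : ℕ) (hn : 2 ≤ n) (hk : 1 ≤ k)
    (hkN : k ≤ Nat.sqrt n) (z : ℂ) (hre : |z.re| ≤ (k : ℝ) / n)
    (him : |z.im| = 1 / (Nat.sqrt n : ℝ)) :
    ‖z ^ (d : ℂ) *
        Complex.exp ((π / k) * (2 * n + δ) * z) *
        Complex.exp (π * β * (1 - x ^ 2) / (k * z))‖ ≤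
      Real.sqrt 2 ^ |d| * Real.exp (3 * π) * Real.exp (π * β) * ((n : ℝ) / k) ^ |d| := by
  set N : ℕ := Nat.sqrt n with hN
  have hnR : (2 : ℝ) ≤ (n : ℝ) := by exact_mod_cast hn
  have hn0 : (0 : ℝ) < n := by linarith
  have hk0 : (0 : ℝ) < k := by exact_mod_cast hk
  have hN1 : 1 ≤ N := Nat.sqrt_pos.mpr (by omega)
  have hN0 : (0 : ℝ) < N := by exact_mod_cast hN1
  have hNsq : (N : ℝ) * N ≤ n := by
    have h : N ^ 2 ≤ n := Nat.sqrt_le' n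
    have h2 : (N:ℝ) ^ 2 ≤ n := by exact_mod_cast h
    nlinarith
  have hkNR : (k : ℝ) ≤ N := by exact_mod_cast hkN
  have hkNn : (k : ℝ) * N ≤ n := le_trans (by nlinarith) hNsq
  have hkn : (k : ℝ) / n ≤ 1 / N := by
    rw [div_le_div_iff₀ hn0 hN0]; nlinarith
  have hzim : z.im ≠ 0 := by
    intro h; rw [h, abs_zero] at him
    have : (0:ℝ) < 1 / N := by positivity
    linarith [him ▸ this]
  have hz0 : z ≠ 0 := fun h => hzim (by simp [h])
  have habs_lb : 1 / (N : ℝ) ≤ ‖z‖ := him ▸ Complex.abs_im_le_norm z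
  have habs_pos : 0 < ‖z‖ := lt_of_lt_of_le (by positivity) habs_lb
  have habs_ub : ‖z‖ ≤ Real.sqrt 2 := by
    have h1 : z.re ^ 2 ≤ 1 := by
      have : |z.re| ≤ 1 := le_trans hre (le_trans hkn (by
        rw [div_le_one hN0]; exact_mod_cast hN1))
      nlinarith [abs_nonneg z.re, _root_.sq_abs z.re]
    have h2 : z.im ^ 2 ≤ 1 := by
      have : |z.im| ≤ 1 := by
        rw [him, div_le_one hN0]; exact_mod_cast hN1
      nlinarith [abs_nonneg z.im, _root_.sq_abs z.im]
    rw [Complex.norm_def, show (2:ℝ) = 1 + 1 by norm_num]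
    apply Real.sqrt_le_sqrt
    rw [Complex.normSq_apply]; nlinarith
  have hnk1 : (1 : ℝ) ≤ (n : ℝ) / k := by
    rw [le_div_iff₀ hk0]; nlinarith
  have hsqrt2 : (1:ℝ) ≤ Real.sqrt 2 := by
    rw [show (1:ℝ) = Real.sqrt 1 by simp]
    exact Real.sqrt_le_sqrt (by norm_num)
  -- bound on |z ^ d|
  have hcpow : ‖z ^ (d : ℂ)‖ ≤ Real.sqrt 2 ^ |d| * ((n : ℝ) / k) ^ |d| := by
    rw [Complex.norm_cpow_real]
    rcases le_or_gt 0 d with hd0 | hd0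
    · rw [_root_.abs_of_nonneg hd0]
      calc ‖z‖ ^ d ≤ Real.sqrt 2 ^ d :=
            Real.rpow_le_rpow habs_pos.le habs_ub hd0
        _ = Real.sqrt 2 ^ d * 1 := by ring
        _ ≤ Real.sqrt 2 ^ d * ((n : ℝ) / k) ^ d := by
            gcongr
            exact Real.one_le_rpow hnk1 hd0
    · rw [abs_of_neg hd0]
      have e1 : ‖z‖ ^ d ≤ (1 / (N : ℝ)) ^ d :=
        Real.rpow_le_rpow_of_nonpos (by positivity) habs_lb hd0.le
      have e2 : (1 / (N : ℝ)) ^ d = (N : ℝ) ^ (-d) := by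
        rw [one_div, Real.inv_rpow hN0.le, ← Real.rpow_neg hN0.le]
      have e3 : (N : ℝ) ^ (-d) ≤ ((n : ℝ) / k) ^ (-d) := by
        apply Real.rpow_le_rpow hN0.le _ (by linarith)
        rw [le_div_iff₀ hk0]; nlinarith
      have e4 : ((n : ℝ) / k) ^ (-d) ≤ Real.sqrt 2 ^ (-d) * ((n : ℝ) / k) ^ (-d) := by
        nlinarith [Real.one_le_rpow hsqrt2 (le_of_lt (neg_pos.mpr hd0)),
          Real.rpow_nonneg (le_trans zero_le_one hnk1) (-d)]
      calc ‖z‖ ^ d ≤ (N : ℝ) ^ (-d) := e2 ▸ e1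
        _ ≤ ((n : ℝ) / k) ^ (-d) := e3
        _ ≤ Real.sqrt 2 ^ (-d) * ((n : ℝ) / k) ^ (-d) := e4
  -- first exponential
  have hexp1 : ‖Complex.exp ((π / k) * (2 * n + δ) * z)‖ ≤ Real.exp (3 * π) := by
    rw [Complex.norm_exp]
    apply Real.exp_le_exp.mpr
    have hrw : (((π : ℂ) / k) * (2 * n + δ) * z).re = (π / k * (2 * n + δ)) * z.re := by
      rw [show ((π : ℂ) / k) * (2 * (n:ℂ) + (δ:ℂ)) * z
          = ((π / k * (2 * n + δ) : ℝ) : ℂ) * z by push_cast; ring,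
        Complex.re_ofReal_mul]
    rw [hrw]
    have hδ1 : δ ≤ 1 := (abs_le.mp hδ).2
    have hδ2 : -1 ≤ δ := (abs_le.mp hδ).1
    have hcpos : 0 ≤ π / k * (2 * n + δ) := by
      have hπ := Real.pi_pos
      have : (0:ℝ) ≤ 2 * n + δ := by linarith
      positivity
    have h1 : z.re ≤ (k:ℝ)/n := le_trans (le_abs_self _) hre
    calc (π / k * (2 * n + δ)) * z.re ≤ (π / k * (2 * n + δ)) * ((k:ℝ)/n) :=
          mul_le_mul_of_nonneg_left h1 hcpos
      _ = π * (2 * n + δ) / n := by field_simp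
      _ ≤ 3 * π := by
          rw [div_le_iff₀ hn0]
          nlinarith [Real.pi_pos]
  -- second exponential
  have hexp2 : ‖Complex.exp (π * β * (1 - x ^ 2) / (k * z))‖ ≤ Real.exp (π * β) := by
    rw [Complex.norm_exp]
    apply Real.exp_le_exp.mpr
    have hrw : ((π : ℂ) * β * (1 - (x:ℂ) ^ 2) / ((k:ℂ) * z)).re
        = (π * β * (1 - x ^ 2)) * ((k:ℝ) * z.re) / ((k:ℝ) * k * Complex.normSq z) := by
      rw [show (π : ℂ) * β * (1 - (x:ℂ) ^ 2) / ((k:ℂ) * z)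
          = ((π * β * (1 - x ^ 2) : ℝ) : ℂ) / ((k:ℂ) * z) by push_cast; ring]
      rw [Complex.div_re, Complex.ofReal_re, Complex.ofReal_im]
      simp only [Complex.normSq_mul, Complex.normSq_natCast, Complex.mul_re,
        Complex.natCast_re, Complex.natCast_im]
      ring
    rw [hrw]
    set c : ℝ := π * β * (1 - x ^ 2) with hc
    obtain ⟨hx1, hx2⟩ := hx
    have hxsq : x ^ 2 ≤ 1 := by
      nlinarith [mul_nonneg (by linarith : (0:ℝ) ≤ 1 - x) (by linarith : (0:ℝ) ≤ 1 + x)]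
    have hc0 : 0 ≤ c := by
      rw [hc]
      exact mul_nonneg (mul_nonneg Real.pi_pos.le hβ.le) (by linarith)
    have hcle : c ≤ π * β := by
      rw [hc]
      nlinarith [mul_nonneg (mul_nonneg Real.pi_pos.le hβ.le) (sq_nonneg x)]
    have hns : (1 : ℝ) / (N:ℝ)^2 ≤ Complex.normSq z := by
      rw [Complex.normSq_apply]
      have h3 := _root_.sq_abs z.im
      rw [him] at h3
      have h4 : (1:ℝ)/(N:ℝ)^2 = z.im * z.im := by
        rw [show (1:ℝ)/(N:ℝ)^2 = (1/(N:ℝ))^2 by ring, h3]; ring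
      rw [h4]
      nlinarith [mul_self_nonneg z.re]
    have hfrac : (k:ℝ) * z.re / ((k:ℝ) * k * Complex.normSq z) ≤ 1 := by
      have hnsq0 : 0 < Complex.normSq z := Complex.normSq_pos.mpr hz0
      rw [div_le_one (mul_pos (mul_pos hk0 hk0) hnsq0)]
      have h1 : (k:ℝ) * z.re ≤ (k:ℝ) * ((k:ℝ)/n) :=
        mul_le_mul_of_nonneg_left (le_trans (le_abs_self _) hre) hk0.le
      have h2 : (k:ℝ) * k * (1/(N:ℝ)^2) ≤ (k:ℝ) * k * Complex.normSq z := by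
        exact mul_le_mul_of_nonneg_left hns (by positivity)
      have h3 : (k:ℝ) * ((k:ℝ)/n) ≤ (k:ℝ) * k * (1/(N:ℝ)^2) := by
        rw [show (k:ℝ) * ((k:ℝ)/n) = (k:ℝ)*k/n by ring,
          show (k:ℝ) * k * (1/(N:ℝ)^2) = (k:ℝ)*k/(N:ℝ)^2 by ring]
        apply div_le_div_of_nonneg_left (by positivity) (by positivity)
        nlinarith
      linarith
    calc c * ((k:ℝ) * z.re) / ((k:ℝ) * k * Complex.normSq z)
        = c * ((k:ℝ) * z.re / ((k:ℝ) * k * Complex.normSq z)) := by ring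
      _ ≤ c * 1 := mul_le_mul_of_nonneg_left hfrac hc0
      _ ≤ π * β := by linarith
  -- combine
  rw [norm_mul, norm_mul]
  have hb1 : (0:ℝ) ≤ Real.sqrt 2 ^ |d| * ((n : ℝ) / k) ^ |d| := by positivity
  calc ‖z ^ (d:ℂ)‖ * ‖Complex.exp ((π / k) * (2 * n + δ) * z)‖
        * ‖Complex.exp (π * β * (1 - x ^ 2) / (k * z))‖
      ≤ (Real.sqrt 2 ^ |d| * ((n : ℝ) / k) ^ |d|) * Real.exp (3 * π) * Real.exp (π * β) := by
        gcongr <;> first | exact hcpow | exact hexp1 | exact hexp2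
    _ = Real.sqrt 2 ^ |d| * Real.exp (3 * π) * Real.exp (π * β) * ((n : ℝ) / k) ^ |d| := by ring

/-- Bound for the horizontal contour pieces `Γ_h^±` in the contour deformation. -/
theorem horizontal_contour_bound (β δ : ℝ) (hβ : 0 < β) (hδ : |δ| ≤ 1)
    (d : ℝ) (hd : ∃ m : ℤ, d = m + 1 / 2) :
    ∃ C > 0, ∀ n : ℕ, 2 ≤ n → ∀ k : ℕ, 1 ≤ k → k ≤ Nat.sqrt n →
      ∀ x : ℝ, x ∈ Set.Icc (-1 : ℝ) 1 →
        (1 / (k : ℝ)) * ‖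
            (∫ s : ℝ in (-(k / n : ℝ))..(k / n : ℝ),
              ((s : ℂ) + I / (Nat.sqrt n : ℝ)) ^ (d : ℂ) *
                Complex.exp ((π / k) * (2 * n + δ) * ((s : ℂ) + I / (Nat.sqrt n : ℝ))) *
                Complex.exp (π * β * (1 - x ^ 2) /
                  (k * ((s : ℂ) + I / (Nat.sqrt n : ℝ)))))‖ ≤
          C * (1 / (k * Real.sqrt n)) * ((n : ℝ) / k) ^ |d| ∧
        (1 / (k : ℝ)) * ‖
            (∫ s : ℝ in (-(k / n : ℝ))..(k / n : ℝ),
              ((s : ℂ) - I / (Nat.sqrt n : ℝ)) ^ (d : ℂ) *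
                Complex.exp ((π / k) * (2 * n + δ) * ((s : ℂ) - I / (Nat.sqrt n : ℝ))) *
                Complex.exp (π * β * (1 - x ^ 2) /
                  (k * ((s : ℂ) - I / (Nat.sqrt n : ℝ)))))‖ ≤
          C * (1 / (k * Real.sqrt n)) * ((n : ℝ) / k) ^ |d| := by
  refine ⟨2 * (Real.sqrt 2 ^ |d| * Real.exp (3 * π) * Real.exp (π * β)), by positivity, ?_⟩
  intro n hn k hk hkN x hx
  set N : ℕ := Nat.sqrt n with hN
  have hnR : (2 : ℝ) ≤ (n : ℝ) := by exact_mod_cast hn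
  have hn0 : (0 : ℝ) < n := by linarith
  have hk0 : (0 : ℝ) < k := by exact_mod_cast hk
  have hN1 : 1 ≤ N := Nat.sqrt_pos.mpr (by omega)
  have hN0 : (0 : ℝ) < N := by exact_mod_cast hN1
  have hNsqrt : (N : ℝ) ≤ Real.sqrt n := by
    rw [show (N:ℝ) = Real.sqrt ((N:ℝ)^2) from (Real.sqrt_sq hN0.le).symm]
    apply Real.sqrt_le_sqrt
    have h : N ^ 2 ≤ n := Nat.sqrt_le' n
    exact_mod_cast h
  have hksn : (k : ℝ) * Real.sqrt n ≤ n := by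
    have hkNR : (k : ℝ) ≤ N := by exact_mod_cast hkN
    calc (k : ℝ) * Real.sqrt n ≤ Real.sqrt n * Real.sqrt n := by
          apply mul_le_mul_of_nonneg_right _ (Real.sqrt_nonneg _)
          exact le_trans hkNR hNsqrt
      _ = n := Real.mul_self_sqrt hn0.le
  have hksn0 : (0 : ℝ) < (k : ℝ) * Real.sqrt n :=
    mul_pos hk0 (lt_of_lt_of_le hN0 hNsqrt)
  set A : ℝ := Real.sqrt 2 ^ |d| * Real.exp (3 * π) * Real.exp (π * β) with hA
  have hA0 : 0 < A := by rw [hA]; positivity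
  have hnk0 : (0 : ℝ) ≤ ((n:ℝ)/k) ^ |d| := Real.rpow_nonneg (by positivity) _
  -- generic step
  have main : ∀ F : ℝ → ℂ,
      (∀ s ∈ Set.uIoc (-(k / n : ℝ)) ((k:ℝ) / n), ‖F s‖ ≤ A * ((n:ℝ)/k) ^ |d|) →
      (1 / (k : ℝ)) * ‖∫ s : ℝ in (-(k / n : ℝ))..(k / n : ℝ), F s‖ ≤
        2 * A * (1 / ((k:ℝ) * Real.sqrt n)) * ((n : ℝ) / k) ^ |d| := by
    intro F hF
    have hint : ‖∫ s : ℝ in (-(k / n : ℝ))..(k / n : ℝ), F s‖ ≤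
        (A * ((n:ℝ)/k) ^ |d|) * |(k:ℝ)/n - (-(k/n : ℝ))| := by
      exact intervalIntegral.norm_integral_le_of_norm_le_const fun s hs => hF s hs
    have habs : |(k:ℝ)/n - (-(k/n : ℝ))| = 2 * k / n := by
      have h : (0:ℝ) ≤ (k:ℝ)/n := by positivity
      rw [_root_.abs_of_nonneg (by linarith : (0:ℝ) ≤ (k:ℝ)/n - (-(k/n:ℝ)))]; ring
    rw [habs] at hint
    calc (1 / (k : ℝ)) * ‖∫ s : ℝ in (-(k / n : ℝ))..(k / n : ℝ), F s‖
        ≤ (1 / (k : ℝ)) * ((A * ((n:ℝ)/k) ^ |d|) * (2 * k / n)) := by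
          apply mul_le_mul_of_nonneg_left hint (by positivity)
      _ = 2 * A * (1/(n:ℝ)) * ((n:ℝ)/k) ^ |d| := by field_simp
      _ ≤ 2 * A * (1 / ((k:ℝ) * Real.sqrt n)) * ((n : ℝ) / k) ^ |d| := by
          apply mul_le_mul_of_nonneg_right _ hnk0
          apply mul_le_mul_of_nonneg_left _ (by linarith)
          exact one_div_le_one_div_of_le hksn0 hksn
  have hmem : ∀ s ∈ Set.uIoc (-(k / n : ℝ)) ((k:ℝ) / n), |s| ≤ (k:ℝ)/n := by
    intro s hs
    rw [Set.uIoc_of_le (by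
      have : (0:ℝ) ≤ (k:ℝ)/n := by positivity
      linarith : -(k / n : ℝ) ≤ (k:ℝ)/n)] at hs
    exact abs_le.mpr ⟨hs.1.le, hs.2⟩
  refine ⟨main _ ?_, main _ ?_⟩
  · intro s hs
    have h1 : ((s:ℂ) + I/((N:ℝ):ℂ)).re = s := by simp [Complex.div_re]
    have h2 : |((s:ℂ) + I/((N:ℝ):ℂ)).im| = 1/(N:ℝ) := by
      have : ((s:ℂ) + I/((N:ℝ):ℂ)).im = 1/(N:ℝ) := by
        simp [Complex.div_im, Complex.normSq_ofReal]
      rw [this, abs_of_pos (by positivity)]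
    have := pointwise_bound β δ d x hβ hδ hx n k hn hk hkN ((s:ℂ) + I/((N:ℝ):ℂ))
      (by rw [h1]; exact hmem s hs) h2
    rw [hA]
    exact this
  · intro s hs
    have h1 : ((s:ℂ) - I/((N:ℝ):ℂ)).re = s := by simp [Complex.div_re]
    have h2 : |((s:ℂ) - I/((N:ℝ):ℂ)).im| = 1/(N:ℝ) := by
      have : ((s:ℂ) - I/((N:ℝ):ℂ)).im = -(1/(N:ℝ)) := by
        simp [Complex.div_im, Complex.normSq_ofReal]
      rw [this, abs_neg, abs_of_pos (by positivity)]
    have := pointwise_bound β δ d x hβ hδ hx n k hn hk hkN ((s:ℂ) - I/((N:ℝ):ℂ))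
      (by rw [h1]; exact hmem s hs) h2
    rw [hA]
    exact this
end

section
/- Let β > 0 and δ be real with |δ| ≤ 1, and let d ∈ 1/2 + ℤ. There is a constant C = C(d,β,δ) > 0 such that for all integers n ≥ 2, N := ⌊√n⌋, all integers k with 1 ≤ k ≤ N, and uniformly for all x ∈ [−1,1]: (1/k)·|∫_{0}^{1/N} (−k/n + it)^d·e^{(π/k)(2n+δ)(−k/n + it)}·e^{πβ(1−x²)/(k(−k/n + it))} dt| ≤ C·(1/(k√n))·(n/k)^{|d|}, where (−k/n+it)^d is the principal branch; the same bound holds for the segment {−k/n − it : 0 ≤ t ≤ 1/N}. -/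
open Complex Real

lemma vb_key (a c d : ℝ) (ha : 0 ≤ a) (hc : 0 ≤ c) (z : ℂ) (hz : z.re < 0) :
    ‖z ^ (d : ℂ) * Complex.exp (↑a * z) * Complex.exp (↑c * z⁻¹)‖ ≤
      ‖z‖ ^ d := by
  have hz0 : z ≠ 0 := fun h => by simp [h] at hz
  rw [norm_mul, norm_mul, Complex.norm_cpow_of_ne_zero hz0, Complex.norm_exp, Complex.norm_exp]
  simp only [Complex.ofReal_re, Complex.ofReal_im, Real.exp_zero, mul_zero, div_one]
  have h1 : Real.exp ((↑a * z).re) ≤ 1 := by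
    rw [Complex.re_ofReal_mul, Real.exp_le_one_iff]
    exact mul_nonpos_of_nonneg_of_nonpos ha hz.le
  have h2 : Real.exp ((↑c * z⁻¹).re) ≤ 1 := by
    rw [Complex.re_ofReal_mul, Real.exp_le_one_iff, Complex.inv_re]
    apply mul_nonpos_of_nonneg_of_nonpos hc
    exact div_nonpos_of_nonpos_of_nonneg hz.le (Complex.normSq_nonneg z)
  have h0 : (0:ℝ) ≤ ‖z‖ ^ d := Real.rpow_nonneg (norm_nonneg z) d
  calc ‖z‖ ^ d * Real.exp ((↑a * z).re) * Real.exp ((↑c * z⁻¹).re)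
      ≤ ‖z‖ ^ d * 1 * 1 := by
        apply mul_le_mul (mul_le_mul_of_nonneg_left h1 h0) h2 (Real.exp_nonneg _)
        positivity
    _ = ‖z‖ ^ d := by ring

set_option maxHeartbeats 1000000 in
/-- Bound for the vertical contour pieces `Γ_v^±` in the contour deformation. -/
theorem vertical_contour_bound (β δ : ℝ) (hβ : 0 < β) (hδ : |δ| ≤ 1)
    (d : ℝ) (hd : ∃ m : ℤ, d = m + 1 / 2) :
    ∃ C > 0, ∀ n : ℕ, 2 ≤ n → ∀ k : ℕ, 1 ≤ k → k ≤ Nat.sqrt n →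
      ∀ x : ℝ, x ∈ Set.Icc (-1 : ℝ) 1 →
        (1 / (k : ℝ)) * ‖(∫ t : ℝ in (0 : ℝ)..(1 / (Nat.sqrt n : ℝ)),
              (-(k / n : ℝ) + I * t) ^ (d : ℂ) *
                Complex.exp ((π / k) * (2 * n + δ) * (-(k / n : ℝ) + I * t)) *
                Complex.exp (π * β * (1 - x ^ 2) / (k * (-(k / n : ℝ) + I * t))))‖ ≤
          C * (1 / (k * Real.sqrt n)) * ((n : ℝ) / k) ^ |d| ∧
        (1 / (k : ℝ)) * ‖(∫ t : ℝ in (0 : ℝ)..(1 / (Nat.sqrt n : ℝ)),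
              (-(k / n : ℝ) - I * t) ^ (d : ℂ) *
                Complex.exp ((π / k) * (2 * n + δ) * (-(k / n : ℝ) - I * t)) *
                Complex.exp (π * β * (1 - x ^ 2) / (k * (-(k / n : ℝ) - I * t))))‖ ≤
          C * (1 / (k * Real.sqrt n)) * ((n : ℝ) / k) ^ |d| := by
  refine ⟨2 * (3 : ℝ) ^ |d|, by positivity, ?_⟩
  intro n hn k hk1 hkN x hx
  have hN1 : 1 ≤ Nat.sqrt n := Nat.sqrt_pos.mpr (by omega)
  have hN1' : (1:ℝ) ≤ (Nat.sqrt n : ℝ) := by exact_mod_cast hN1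
  have hn0 : (0:ℝ) < n := by positivity
  have hn2 : (2:ℝ) ≤ n := by exact_mod_cast hn
  have hk0 : (0:ℝ) < k := by exact_mod_cast hk1
  have hs0 : (0:ℝ) < Real.sqrt n := Real.sqrt_pos.mpr hn0
  have hs1 : (1:ℝ) ≤ Real.sqrt n := Real.le_sqrt_of_sq_le (by nlinarith)
  have hNle : (Nat.sqrt n : ℝ) ≤ Real.sqrt n := by
    rw [Real.le_sqrt (by positivity) hn0.le]
    exact_mod_cast Nat.sqrt_le' n
  have hkle : (k:ℝ) ≤ Real.sqrt n :=
    le_trans (by exact_mod_cast hkN) hNle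
  have hsle : Real.sqrt n ≤ 2 * (Nat.sqrt n : ℝ) := by
    have h2 : Real.sqrt n < (Nat.sqrt n : ℝ) + 1 := by
      rw [Real.sqrt_lt' (by positivity)]
      have h := Nat.lt_succ_sqrt n
      have h' : (n:ℝ) < ((Nat.sqrt n : ℝ) + 1) * ((Nat.sqrt n : ℝ) + 1) := by
        exact_mod_cast h
      nlinarith
    linarith
  have hknle : (k:ℝ)/n ≤ 1/Real.sqrt n := by
    rw [div_le_div_iff₀ hn0 hs0]
    nlinarith [Real.mul_self_sqrt hn0.le]
  have hNinv : 1/(Nat.sqrt n : ℝ) ≤ 2/Real.sqrt n := by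
    rw [div_le_div_iff₀ (by positivity) hs0]
    linarith
  have hkn : (0:ℝ) < (k:ℝ)/n := by positivity
  have hnk1 : (1:ℝ) ≤ (n:ℝ)/k := by
    rw [le_div_iff₀ hk0]
    nlinarith [Real.mul_self_sqrt hn0.le]
  set M : ℝ := (3:ℝ) ^ |d| * ((n:ℝ)/k) ^ |d| with hM
  have hM0 : 0 ≤ M := by positivity
  -- pointwise bound
  have main : ∀ z : ℂ, z.re = -((k:ℝ)/n) → |z.im| ≤ 1/(Nat.sqrt n : ℝ) →
      ‖z ^ (d : ℂ) * Complex.exp (((π/(k:ℝ)*(2*(n:ℝ)+δ) : ℝ) : ℂ) * z) *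
        Complex.exp (((π*β*(1-x^2)/(k:ℝ) : ℝ) : ℂ) * z⁻¹)‖ ≤ M := by
    intro z hre him
    have hzre : z.re < 0 := by rw [hre]; linarith
    have ha : 0 ≤ π/(k:ℝ)*(2*(n:ℝ)+δ) := by
      have h1 := abs_le.mp hδ
      have : (0:ℝ) ≤ 2*(n:ℝ)+δ := by linarith
      positivity
    have hc : 0 ≤ π*β*(1-x^2)/(k:ℝ) := by
      obtain ⟨hx1, hx2⟩ := hx
      have : 0 ≤ 1 - x^2 := by nlinarith
      positivity
    refine le_trans (vb_key _ _ d ha hc z hzre) ?_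
    have habs_ub : ‖z‖ ≤ 3 := by
      have h1 := Complex.norm_le_abs_re_add_abs_im z
      rw [hre, abs_neg, _root_.abs_of_nonneg hkn.le] at h1
      have h3 : ‖z‖ ≤ 1/Real.sqrt n + 2/Real.sqrt n := by
        linarith [le_trans him hNinv]
      have he : 1/Real.sqrt ↑n + 2/Real.sqrt ↑n = 3/Real.sqrt ↑n := by ring
      calc ‖z‖ ≤ 3/Real.sqrt n := by linarith
        _ ≤ 3 := by rw [div_le_iff₀ hs0]; nlinarith
    have habs_lb : (k:ℝ)/n ≤ ‖z‖ := by
      have h1 := Complex.abs_re_le_norm z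
      rwa [hre, abs_neg, _root_.abs_of_nonneg hkn.le] at h1
    have h3d : (1:ℝ) ≤ (3:ℝ) ^ |d| := Real.one_le_rpow (by norm_num) (abs_nonneg d)
    rcases le_or_gt 0 d with hd0 | hd0
    · have h1 : ‖z‖ ^ d ≤ (3:ℝ) ^ d :=
        Real.rpow_le_rpow (norm_nonneg z) habs_ub hd0
      have h2 : (1:ℝ) ≤ ((n:ℝ)/k) ^ |d| := Real.one_le_rpow hnk1 (abs_nonneg d)
      rw [hM]
      calc ‖z‖ ^ d ≤ (3:ℝ) ^ |d| := by rwa [_root_.abs_of_nonneg hd0]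
        _ ≤ (3:ℝ) ^ |d| * ((n:ℝ)/k) ^ |d| :=
            le_mul_of_one_le_right (by positivity) h2
    · have h1 : ‖z‖ ^ d ≤ ((k:ℝ)/n) ^ d :=
        Real.rpow_le_rpow_of_nonpos hkn habs_lb hd0.le
      have heq : ((k:ℝ)/n) ^ d = ((n:ℝ)/k) ^ |d| := by
        rw [abs_of_neg hd0, show (k:ℝ)/n = ((n:ℝ)/k)⁻¹ by rw [inv_div],
          Real.inv_rpow (by positivity), ← Real.rpow_neg (by positivity)]
      rw [hM]
      calc ‖z‖ ^ d ≤ ((n:ℝ)/k) ^ |d| := by rw [← heq]; exact h1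
        _ ≤ (3:ℝ) ^ |d| * ((n:ℝ)/k) ^ |d| :=
            le_mul_of_one_le_left (by positivity) h3d
  -- integral bound helper
  have hIoc : Set.uIoc (0:ℝ) (1/(Nat.sqrt n : ℝ)) = Set.Ioc 0 (1/(Nat.sqrt n : ℝ)) :=
    Set.uIoc_of_le (by positivity)
  have hintbd : ∀ f : ℝ → ℂ,
      (∀ t ∈ Set.Ioc (0:ℝ) (1/(Nat.sqrt n : ℝ)), ‖f t‖ ≤ M) →
      ‖∫ t : ℝ in (0:ℝ)..(1/(Nat.sqrt n : ℝ)), f t‖ ≤ M * (1/(Nat.sqrt n : ℝ)) := by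
    intro f hf
    have := intervalIntegral.norm_integral_le_of_norm_le_const (a := 0)
      (b := 1/(Nat.sqrt n : ℝ)) (C := M) (f := f) (by
        intro t ht
        rw [hIoc] at ht
        exact hf t ht)
    rwa [sub_zero, _root_.abs_of_nonneg (by positivity)] at this
  -- final arithmetic helper
  have hfinal : (1/(k:ℝ)) * (M * (1/(Nat.sqrt n : ℝ))) ≤
      2 * (3:ℝ) ^ |d| * (1 / ((k:ℝ) * Real.sqrt n)) * ((n:ℝ)/k) ^ |d| := by
    calc (1/(k:ℝ)) * (M * (1/(Nat.sqrt n : ℝ)))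
        ≤ (1/(k:ℝ)) * (M * (2/Real.sqrt n)) :=
          mul_le_mul_of_nonneg_left
            (mul_le_mul_of_nonneg_left hNinv hM0) (by positivity)
      _ = 2 * (3:ℝ) ^ |d| * (1 / ((k:ℝ) * Real.sqrt n)) * ((n:ℝ)/k) ^ |d| := by
          rw [hM]; field_simp
  constructor
  · refine le_trans ?_ hfinal
    apply mul_le_mul_of_nonneg_left _ (by positivity)
    apply hintbd
    intro t ht
    have hti : |t| ≤ 1/(Nat.sqrt n : ℝ) := by
      rw [_root_.abs_of_nonneg ht.1.le]; exact ht.2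
    have hre : ((-(k / n : ℝ) : ℂ) + I * (t:ℂ)).re = -((k:ℝ)/n) := by simp
    have him : |((-(k / n : ℝ) : ℂ) + I * (t:ℂ)).im| ≤ 1/(Nat.sqrt n : ℝ) := by
      simpa using hti
    have h := main _ hre him
    convert h using 3
    · push_cast; ring
    · congr 1
      rw [div_eq_mul_inv, mul_inv]
      push_cast; ring
  · refine le_trans ?_ hfinal
    apply mul_le_mul_of_nonneg_left _ (by positivity)
    apply hintbd
    intro t ht
    have hti : |t| ≤ 1/(Nat.sqrt n : ℝ) := by
      rw [_root_.abs_of_nonneg ht.1.le]; exact ht.2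
    have hre : ((-(k / n : ℝ) : ℂ) - I * (t:ℂ)).re = -((k:ℝ)/n) := by simp
    have him : |((-(k / n : ℝ) : ℂ) - I * (t:ℂ)).im| ≤ 1/(Nat.sqrt n : ℝ) := by
      simpa using hti
    have h := main _ hre him
    convert h using 3
    · push_cast; ring
    · congr 1
      rw [div_eq_mul_inv, mul_inv]
      push_cast; ring
end

section
/- Let β > 0 and δ be real with |δ| ≤ 1, and let d ∈ 1/2 + ℤ. There is a constant C = C(d,β,δ) > 0 such that for all integers n ≥ 2, N := ⌊√n⌋, all integers k with 1 ≤ k ≤ N, and uniformly for all x ∈ [−1,1]: (1/k)·∫_{−∞}^{−k/n} |s|^d·e^{(πs/k)(2n+δ)}·e^{πβ(1−x²)/(ks)} ds ≤ C·(1/(k√n))·(n/k)^{|d|}. -/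
open Real

open MeasureTheory Set in
/-- Bound for the two rays `Γ_∞^±` along the slit on the negative real axis. -/
theorem ray_contour_bound (β δ : ℝ) (hβ : 0 < β) (hδ : |δ| ≤ 1)
    (d : ℝ) (hd : ∃ m : ℤ, d = m + 1 / 2) :
    ∃ C > 0, ∀ n : ℕ, 2 ≤ n → ∀ k : ℕ, 1 ≤ k → k ≤ Nat.sqrt n →
      ∀ x : ℝ, x ∈ Set.Icc (-1 : ℝ) 1 →
        (1 / (k : ℝ)) *
            (∫ s : ℝ in Set.Iic (-(k / n : ℝ)),
              |s| ^ d * Real.exp ((π * s / k) * (2 * n + δ)) *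
                Real.exp (π * β * (1 - x ^ 2) / (k * s))) ≤
          C * (1 / (k * Real.sqrt n)) * ((n : ℝ) / k) ^ |d| := by
  have hπ : (0 : ℝ) < π := Real.pi_pos
  refine ⟨max ((1 / π) ^ (d + 1) * Real.Gamma (d + 1)) (1 / π),
    lt_of_lt_of_le (by positivity) (le_max_right _ _), ?_⟩
  intro n hn k hk hkn x hx
  have hδ1 : -1 ≤ δ := (abs_le.mp hδ).1
  have hk0 : (0 : ℝ) < k := by exact_mod_cast hk
  have hn0 : (0 : ℝ) < n := by positivity
  have hn2 : (2 : ℝ) ≤ n := by exact_mod_cast hn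
  have hx2 : x ^ 2 ≤ 1 := by nlinarith [hx.1, hx.2]
  have hsq0 : (0 : ℝ) < Real.sqrt n := Real.sqrt_pos.mpr hn0
  have hksq : (k : ℝ) ≤ Real.sqrt n :=
    le_trans (by exact_mod_cast hkn) Real.nat_sqrt_le_real_sqrt
  have hsqn : Real.sqrt n * Real.sqrt n = (n : ℝ) := Real.mul_self_sqrt hn0.le
  have hkn' : (k : ℝ) ≤ n := le_trans hksq (by nlinarith)
  set a : ℝ := (k : ℝ) / n with ha_def
  have ha : 0 < a := by positivity
  have hainv : a⁻¹ = (n : ℝ) / k := by rw [ha_def, inv_div]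
  set b : ℝ := π * (2 * n + δ) / k with hb_def
  have hb : 0 < b := by
    apply div_pos _ hk0
    nlinarith
  have hbn : 1 / b ≤ k / (π * n) := by
    rw [div_le_div_iff₀ hb (by positivity)]
    have : b * k = π * (2 * n + δ) := by rw [hb_def, div_mul_cancel₀ _ hk0.ne']
    nlinarith
  set F : ℝ → ℝ := fun s =>
    |s| ^ d * Real.exp ((π * s / k) * (2 * n + δ)) *
      Real.exp (π * β * (1 - x ^ 2) / (k * s)) with hF_def
  -- change of variables s ↦ -t
  have hflip : (∫ s in Iic (-a), F s) = ∫ t in Ioi a, F (-t) := by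
    have := integral_comp_neg_Iic (-a) (fun t => F (-t))
    simpa [neg_neg] using this
  -- pointwise bound on Ioi a
  have hpt : ∀ t ∈ Ioi a, F (-t) ≤ t ^ d * Real.exp (-(b * t)) := by
    intro t ht
    have ht0 : 0 < t := lt_trans ha ht
    have habs : |(-t)| = t := by rw [abs_neg, abs_of_pos ht0]
    have hexp : (π * (-t) / k) * (2 * n + δ) = -(b * t) := by
      rw [hb_def]; ring
    have hthird : Real.exp (π * β * (1 - x ^ 2) / (k * (-t))) ≤ 1 := by
      rw [Real.exp_le_one_iff]
      apply div_nonpos_of_nonneg_of_nonpos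
      · have h1x : (0:ℝ) ≤ 1 - x ^ 2 := by linarith
        positivity
      · nlinarith
    have h1 : (0 : ℝ) ≤ t ^ d * Real.exp (-(b * t)) := by positivity
    calc F (-t) = t ^ d * Real.exp (-(b * t)) *
          Real.exp (π * β * (1 - x ^ 2) / (k * (-t))) := by
          simp only [hF_def, habs, hexp]
      _ ≤ t ^ d * Real.exp (-(b * t)) * 1 :=
          mul_le_mul_of_nonneg_left hthird h1
      _ = t ^ d * Real.exp (-(b * t)) := by ring
  have hFnonneg : ∀ t ∈ Ioi a, 0 ≤ F (-t) := by
    intro t ht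
    have ht0 : 0 < t := lt_trans ha ht
    have habs : |(-t)| = t := by rw [abs_neg, abs_of_pos ht0]
    simp only [hF_def, habs]
    positivity
  rcases le_or_gt 0 d with hd0 | hd0
  · -- case d ≥ 0
    have habsd : |d| = d := abs_of_nonneg hd0
    have hInt : IntegrableOn (fun t => t ^ d * Real.exp (-(b * t))) (Ioi (0:ℝ)) := by
      have := integrableOn_rpow_mul_exp_neg_mul_rpow (p := 1) (show (-1:ℝ) < d by linarith)
        one_pos hb
      refine this.congr_fun (fun t _ => ?_) measurableSet_Ioi
      show t ^ d * Real.exp (-b * t ^ (1:ℝ)) = _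
      rw [Real.rpow_one, neg_mul]
    have hIa : (∫ t in Ioi a, F (-t)) ≤ ∫ t in Ioi (0:ℝ), t ^ d * Real.exp (-(b * t)) := by
      calc (∫ t in Ioi a, F (-t)) ≤ ∫ t in Ioi a, t ^ d * Real.exp (-(b * t)) := by
            apply integral_mono_of_nonneg
            · filter_upwards [ae_restrict_mem measurableSet_Ioi] with t ht
              exact hFnonneg t ht
            · exact hInt.mono_set (Ioi_subset_Ioi ha.le)
            · filter_upwards [ae_restrict_mem measurableSet_Ioi] with t ht
              exact hpt t ht
        _ ≤ ∫ t in Ioi (0:ℝ), t ^ d * Real.exp (-(b * t)) := by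
            apply setIntegral_mono_set hInt
            · filter_upwards [ae_restrict_mem measurableSet_Ioi] with t ht
              have ht0 : (0:ℝ) < t := ht
              positivity
            · exact (Ioi_subset_Ioi ha.le).eventuallyLE
    have hGamma : (∫ t in Ioi (0:ℝ), t ^ d * Real.exp (-(b * t)))
        = (1 / b) ^ (d + 1) * Real.Gamma (d + 1) := by
      have := Real.integral_rpow_mul_exp_neg_mul_Ioi (show (0:ℝ) < d + 1 by linarith) hb
      simpa using this
    have hΓpos : 0 < Real.Gamma (d + 1) := Real.Gamma_pos_of_pos (by linarith)
    have hq1 : a ≤ 1 := by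
      rw [ha_def, div_le_one hn0]; exact hkn'
    have hsd : (1:ℝ) / Real.sqrt n = Real.sqrt n / n := by
      rw [div_eq_div_iff hsq0.ne' hn0.ne', one_mul]; exact hsqn.symm
    have hq2 : a ≤ 1 / Real.sqrt n := by
      rw [ha_def, hsd]
      gcongr
    have hik : ((n : ℝ) / k) ^ d = a ^ (-d) := by
      rw [← hainv, Real.inv_rpow ha.le, ← Real.rpow_neg ha.le]
    have hrpow : (1 / b) ^ (d + 1) ≤ (1 / π) ^ (d + 1) *
        ((1 / Real.sqrt n) * ((n : ℝ) / k) ^ d) := by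
      have h1 : (1 / b : ℝ) ≤ (1 / π) * a := by
        calc (1/b : ℝ) ≤ k / (π * n) := hbn
          _ = (1 / π) * a := by rw [ha_def]; field_simp
      have h2 : (1 / b) ^ (d + 1) ≤ ((1 / π) * a) ^ (d + 1) :=
        Real.rpow_le_rpow (by positivity) h1 (by linarith)
      have h3 : ((1 / π) * a) ^ (d + 1) = (1 / π) ^ (d + 1) * a ^ (d + 1) :=
        Real.mul_rpow (by positivity) ha.le
      have h4 : a ^ (d + 1) = a ^ (2 * d + 1) * ((n : ℝ) / k) ^ d := by
        rw [hik, ← Real.rpow_add ha]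
        ring_nf
      have h5 : a ^ (2 * d + 1) ≤ 1 / Real.sqrt n := by
        calc a ^ (2 * d + 1) ≤ a ^ (1 : ℝ) :=
              Real.rpow_le_rpow_of_exponent_ge ha hq1 (by linarith)
          _ = a := Real.rpow_one a
          _ ≤ 1 / Real.sqrt n := hq2
      have h6 : a ^ (d + 1) ≤ (1 / Real.sqrt n) * ((n : ℝ) / k) ^ d := by
        rw [h4]
        exact mul_le_mul_of_nonneg_right h5 (Real.rpow_nonneg (by positivity) d)
      calc (1 / b) ^ (d + 1) ≤ (1 / π) ^ (d + 1) * a ^ (d + 1) := by rw [← h3]; exact h2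
        _ ≤ (1 / π) ^ (d + 1) * ((1 / Real.sqrt n) * ((n : ℝ) / k) ^ d) :=
            mul_le_mul_of_nonneg_left h6 (Real.rpow_nonneg (by positivity) _)
    rw [habsd]
    calc (1 / (k : ℝ)) * (∫ s in Iic (-a), F s)
        ≤ (1 / (k : ℝ)) * ((1 / b) ^ (d + 1) * Real.Gamma (d + 1)) := by
          apply mul_le_mul_of_nonneg_left _ (by positivity)
          rw [hflip, ← hGamma]; exact hIa
      _ ≤ (1 / (k : ℝ)) * ((1 / π) ^ (d + 1) *
            ((1 / Real.sqrt n) * ((n : ℝ) / k) ^ d) * Real.Gamma (d + 1)) := by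
          apply mul_le_mul_of_nonneg_left _ (by positivity)
          exact mul_le_mul_of_nonneg_right hrpow hΓpos.le
      _ = ((1 / π) ^ (d + 1) * Real.Gamma (d + 1)) * (1 / ((k : ℝ) * Real.sqrt n)) *
            ((n : ℝ) / k) ^ d := by
          ring
      _ ≤ (max ((1 / π) ^ (d + 1) * Real.Gamma (d + 1)) (1 / π)) *
            (1 / ((k : ℝ) * Real.sqrt n)) * ((n : ℝ) / k) ^ d := by
          apply mul_le_mul_of_nonneg_right _ (Real.rpow_nonneg (by positivity) d)
          exact mul_le_mul_of_nonneg_right (le_max_left _ _) (by positivity)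
  · -- case d < 0
    have habsd : |d| = -d := abs_of_neg hd0
    have hnk : ((n : ℝ) / k) ^ |d| = a ^ d := by
      rw [habsd, ← hainv, Real.inv_rpow ha.le, ← Real.rpow_neg ha.le, neg_neg]
    have hpt' : ∀ t ∈ Ioi a, F (-t) ≤ a ^ d * Real.exp (-(b * t)) := by
      intro t ht
      refine le_trans (hpt t ht) ?_
      have htd : t ^ d ≤ a ^ d := Real.rpow_le_rpow_of_nonpos ha (le_of_lt ht) hd0.le
      exact mul_le_mul_of_nonneg_right htd (Real.exp_nonneg _)
    have hIntK : IntegrableOn (fun t => a ^ d * Real.exp (-(b * t))) (Ioi a) := by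
      have h0 : IntegrableOn (fun x => a ^ d * Real.exp (-b * x)) (Ioi a) :=
        (exp_neg_integrableOn_Ioi a hb).const_mul (a ^ d)
      refine h0.congr_fun (fun t _ => ?_) measurableSet_Ioi
      show a ^ d * Real.exp (-b * t) = _
      rw [neg_mul]
    have hE : (∫ t in Ioi a, Real.exp (-(b * t))) = b⁻¹ * Real.exp (-(b * a)) := by
      have := integral_comp_mul_left_Ioi (fun u => Real.exp (-u)) a hb
      simpa [integral_exp_neg_Ioi, integral_exp_Iic, smul_eq_mul] using this
    have hIa : (∫ t in Ioi a, F (-t)) ≤ a ^ d * (b⁻¹ * Real.exp (-(b * a))) := by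
      calc (∫ t in Ioi a, F (-t)) ≤ ∫ t in Ioi a, a ^ d * Real.exp (-(b * t)) := by
            apply integral_mono_of_nonneg
            · filter_upwards [ae_restrict_mem measurableSet_Ioi] with t ht
              exact hFnonneg t ht
            · exact hIntK
            · filter_upwards [ae_restrict_mem measurableSet_Ioi] with t ht
              exact hpt' t ht
        _ = a ^ d * ∫ t in Ioi a, Real.exp (-(b * t)) := integral_const_mul _ _
        _ = a ^ d * (b⁻¹ * Real.exp (-(b * a))) := by rw [hE]
    have hIa2 : (∫ t in Ioi a, F (-t)) ≤ a ^ d * ((k : ℝ) / (π * n)) := by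
      refine le_trans hIa ?_
      apply mul_le_mul_of_nonneg_left _ (Real.rpow_nonneg ha.le d)
      calc b⁻¹ * Real.exp (-(b * a)) ≤ b⁻¹ * 1 := by
            apply mul_le_mul_of_nonneg_left _ (inv_nonneg.mpr hb.le)
            rw [Real.exp_le_one_iff]
            exact neg_nonpos.mpr (by positivity)
        _ = 1 / b := by rw [mul_one, one_div]
        _ ≤ (k : ℝ) / (π * n) := hbn
    rw [hnk]
    calc (1 / (k : ℝ)) * (∫ s in Iic (-a), F s)
        ≤ (1 / (k : ℝ)) * (a ^ d * ((k : ℝ) / (π * n))) := by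
          apply mul_le_mul_of_nonneg_left _ (by positivity)
          rw [hflip]; exact hIa2
      _ = (1 / π) * (1 / (n : ℝ)) * a ^ d := by field_simp
      _ ≤ (1 / π) * (1 / ((k : ℝ) * Real.sqrt n)) * a ^ d := by
          apply mul_le_mul_of_nonneg_right _ (Real.rpow_nonneg ha.le d)
          apply mul_le_mul_of_nonneg_left _ (by positivity)
          have hksn : (k:ℝ) * Real.sqrt n ≤ n := by
            calc (k:ℝ) * Real.sqrt n ≤ Real.sqrt n * Real.sqrt n :=
                  mul_le_mul_of_nonneg_right hksq hsq0.le
              _ = n := hsqn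
          exact one_div_le_one_div_of_le (by positivity) hksn
      _ ≤ (max ((1 / π) ^ (d + 1) * Real.Gamma (d + 1)) (1 / π)) *
            (1 / ((k : ℝ) * Real.sqrt n)) * a ^ d := by
          apply mul_le_mul_of_nonneg_right _ (Real.rpow_nonneg ha.le d)
          exact mul_le_mul_of_nonneg_right (le_max_right _ _) (by positivity)
end

section
/- Let T be an odd integer with 0 < T < 27 and let r ≥ 3 be an integer. There is a constant C = C(r,T) > 0 such that in the circle-method setup, for every A > 0 and every continuous function E on {k/n − ikφ : φ ∈ [−ϑ', ϑ'']} satisfying |E(z)| ≤ A·k^{r/2}·|z|^{−r+1/2}·e^{−(π/k)(9/(4T) − 1/12)·Re(1/z)} for all such z: |∫_{−ϑ'}^{ϑ''} E(z)·e^{2πnz/k} dφ| ≤ C·A·n^{r−1}·k^{−r/2−1/2}. -/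
open Complex Real

/-- Integrating an error function with the stated pointwise bound over a circle-method
arc against `e^{2πnz/k}` gives `O(A·n^{r−1}·k^{−r/2−1/2})` for `0 < T < 27` odd. -/
theorem circle_integral_errorH (T : ℕ) (hT : Odd T) (hTpos : 0 < T) (hT27 : T < 27)
    (r : ℕ) (hr : 3 ≤ r) :
    ∃ C > 0, ∀ n : ℕ, 2 ≤ n → ∀ k : ℕ, 1 ≤ k → k ≤ Nat.sqrt n →
      ∀ ϑ₁ ϑ₂ : ℝ,
        1 / (2 * k * (Nat.sqrt n : ℝ)) ≤ ϑ₁ → ϑ₁ ≤ 1 / (k * (Nat.sqrt n : ℝ)) →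
        1 / (2 * k * (Nat.sqrt n : ℝ)) ≤ ϑ₂ → ϑ₂ ≤ 1 / (k * (Nat.sqrt n : ℝ)) →
        ∀ A : ℝ, 0 < A → ∀ E : ℂ → ℂ,
          ContinuousOn E ((fun φ : ℝ => (k : ℂ) / n - I * k * φ) '' Set.Icc (-ϑ₁) ϑ₂) →
          (∀ w ∈ (fun φ : ℝ => (k : ℂ) / n - I * k * φ) '' Set.Icc (-ϑ₁) ϑ₂,
            ‖E w‖ ≤
              A * (k : ℝ) ^ ((r : ℝ) / 2) * ‖w‖ ^ (-(r : ℝ) + 1 / 2) *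
                Real.exp (-(π / k) * (9 / (4 * T) - 1 / 12) * (1 / w).re)) →
          ‖(∫ φ : ℝ in (-ϑ₁)..ϑ₂,
                E ((k : ℂ) / n - I * k * φ) *
                  Complex.exp (2 * π * n * ((k : ℂ) / n - I * k * φ) / k))‖ ≤
            C * A * (n : ℝ) ^ (r - 1) * (k : ℝ) ^ (-(r : ℝ) / 2 - 1 / 2) := by
  refine ⟨4 * Real.exp (2 * π), by positivity, ?_⟩
  intro n hn k hk hkN ϑ₁ ϑ₂ hϑ₁l hϑ₁u hϑ₂l hϑ₂u A hA E hE hbound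
  have hn0 : (0:ℝ) < n := by exact_mod_cast (by omega : 0 < n)
  have hk0 : (0:ℝ) < k := by exact_mod_cast hk
  have hNnat : 1 ≤ Nat.sqrt n := Nat.sqrt_pos.mpr (by omega)
  have hN0 : (0:ℝ) < (Nat.sqrt n : ℝ) := by exact_mod_cast hNnat
  have hϑ₁0 : 0 < ϑ₁ := lt_of_lt_of_le (by positivity) hϑ₁l
  have hϑ₂0 : 0 < ϑ₂ := lt_of_lt_of_le (by positivity) hϑ₂l
  have hle : -ϑ₁ ≤ ϑ₂ := le_trans (by linarith) hϑ₂0.le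
  -- pointwise bound
  set M : ℝ := A * (k : ℝ) ^ ((r : ℝ) / 2) * ((k:ℝ)/n) ^ (-(r : ℝ) + 1 / 2) * Real.exp (2*π)
    with hM
  have hpt : ∀ φ ∈ Set.uIoc (-ϑ₁) ϑ₂,
      ‖E ((k : ℂ) / n - I * k * φ) *
        Complex.exp (2 * π * n * ((k : ℂ) / n - I * k * φ) / k)‖ ≤ M := by
    intro φ hφ
    have hφ' : φ ∈ Set.Icc (-ϑ₁) ϑ₂ := by
      rw [Set.uIoc_of_le hle] at hφ
      exact Set.Ioc_subset_Icc_self hφ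
    set z : ℂ := (k : ℂ) / n - I * k * φ with hz
    have hzmem : z ∈ (fun φ : ℝ => (k : ℂ) / n - I * k * φ) '' Set.Icc (-ϑ₁) ϑ₂ :=
      ⟨φ, hφ', rfl⟩
    have hn' : (n:ℂ) ≠ 0 := by exact_mod_cast hn0.ne'
    have hk' : (k:ℂ) ≠ 0 := by exact_mod_cast hk0.ne'
    have hzre : z.re = (k:ℝ)/n := by
      simp [hz, Complex.div_re]
      rw [mul_div_mul_right _ _ hn0.ne']
    have hzre0 : 0 < z.re := by rw [hzre]; positivity
    have habsz : (k:ℝ)/n ≤ ‖z‖ := hzre ▸ Complex.re_le_norm z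
    -- exponential factor of the integrand
    have hwre : (2 * (π:ℂ) * n * z / k).re = 2 * π := by
      have h1 : 2 * (π:ℂ) * n * z / k = 2*π - I * (2*π*n*φ) := by
        rw [hz]; field_simp
      rw [h1]; simp
    -- the decay exponential is at most 1
    have hT0 : (0:ℝ) < T := by exact_mod_cast hTpos
    have hc : (0:ℝ) ≤ 9 / (4 * T) - 1 / 12 := by
      rw [sub_nonneg, div_le_div_iff₀ (by norm_num) (by positivity)]
      have : (T:ℝ) ≤ 26 := by exact_mod_cast (by omega : T ≤ 26)
      nlinarith
    have hinvre : 0 ≤ (1/z).re := by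
      rw [one_div, Complex.inv_re]
      exact div_nonneg hzre0.le (Complex.normSq_nonneg z)
    have hexp1 : Real.exp (-(π / k) * (9 / (4 * T) - 1 / 12) * (1 / z).re) ≤ 1 := by
      rw [Real.exp_le_one_iff]
      have h1 : 0 ≤ (π / k) * (9 / (4 * T) - 1 / 12) * (1 / z).re := by
        have : 0 ≤ π / k := by positivity
        exact mul_nonneg (mul_nonneg this hc) hinvre
      linarith
    -- abs bound on E z
    have hEz : ‖E z‖ ≤ A * (k : ℝ) ^ ((r : ℝ) / 2) * ((k:ℝ)/n) ^ (-(r : ℝ) + 1 / 2) := by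
      refine le_trans (hbound z hzmem) ?_
      have h2 : ‖z‖ ^ (-(r : ℝ) + 1 / 2) ≤ ((k:ℝ)/n) ^ (-(r : ℝ) + 1 / 2) := by
        refine Real.rpow_le_rpow_of_nonpos (by positivity) habsz ?_
        have : (3:ℝ) ≤ (r:ℝ) := by exact_mod_cast hr
        linarith
      calc A * (k : ℝ) ^ ((r : ℝ) / 2) * ‖z‖ ^ (-(r : ℝ) + 1 / 2) *
            Real.exp (-(π / k) * (9 / (4 * T) - 1 / 12) * (1 / z).re)
          ≤ A * (k : ℝ) ^ ((r : ℝ) / 2) * ‖z‖ ^ (-(r : ℝ) + 1 / 2) * 1 := by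
            apply mul_le_mul_of_nonneg_left hexp1
            positivity
        _ ≤ A * (k : ℝ) ^ ((r : ℝ) / 2) * ((k:ℝ)/n) ^ (-(r : ℝ) + 1 / 2) := by
            rw [mul_one]
            exact mul_le_mul_of_nonneg_left h2 (by positivity)
    rw [norm_mul, Complex.norm_exp, hwre, hM]
    exact mul_le_mul_of_nonneg_right hEz (Real.exp_nonneg _)
  have hInt := intervalIntegral.norm_integral_le_of_norm_le_const hpt
  have hM0 : 0 ≤ M := by positivity
  -- length bound
  have hsqrt : Real.sqrt n ≤ 2 * (Nat.sqrt n : ℝ) := by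
    have h1 : n < (Nat.sqrt n + 1) * (Nat.sqrt n + 1) := Nat.lt_succ_sqrt n
    have h2 : (n:ℝ) ≤ (2 * (Nat.sqrt n : ℝ))^2 := by
      have : (n:ℝ) < ((Nat.sqrt n : ℝ) + 1) * ((Nat.sqrt n : ℝ) + 1) := by exact_mod_cast h1
      have h3 : (1:ℝ) ≤ (Nat.sqrt n : ℝ) := by exact_mod_cast hNnat
      nlinarith
    calc Real.sqrt n ≤ Real.sqrt ((2 * (Nat.sqrt n : ℝ))^2) := Real.sqrt_le_sqrt h2
      _ = 2 * (Nat.sqrt n : ℝ) := Real.sqrt_sq (by positivity)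
  have hlen : |ϑ₂ - (-ϑ₁)| ≤ 4 / ((k:ℝ) * Real.sqrt n) := by
    have hs0 : 0 < Real.sqrt n := Real.sqrt_pos.mpr hn0
    have h1 : ϑ₁ + ϑ₂ ≤ 2 / ((k:ℝ) * (Nat.sqrt n : ℝ)) := by
      calc ϑ₁ + ϑ₂ ≤ 1 / ((k:ℝ) * (Nat.sqrt n : ℝ)) + 1 / ((k:ℝ) * (Nat.sqrt n : ℝ)) :=
            add_le_add hϑ₁u hϑ₂u
        _ = 2 / ((k:ℝ) * (Nat.sqrt n : ℝ)) := by ring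
    have h2 : 2 / ((k:ℝ) * (Nat.sqrt n : ℝ)) ≤ 4 / ((k:ℝ) * Real.sqrt n) := by
      rw [div_le_div_iff₀ (by positivity) (by positivity)]
      nlinarith [hsqrt, hk0, hs0]
    rw [_root_.abs_of_nonneg (by linarith : (0:ℝ) ≤ ϑ₂ - -ϑ₁)]
    calc ϑ₂ - (-ϑ₁) = ϑ₁ + ϑ₂ := by ring
      _ ≤ _ := le_trans h1 h2
  -- final algebra
  have hkey : M * (4 / ((k:ℝ) * Real.sqrt n)) =
      4 * Real.exp (2*π) * A * (n : ℝ) ^ (r - 1) * (k : ℝ) ^ (-(r : ℝ) / 2 - 1 / 2) := by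
    have e1 : ((k:ℝ)/n) ^ (-(r : ℝ) + 1 / 2)
        = (k:ℝ) ^ (-(r : ℝ) + 1 / 2) * (n:ℝ) ^ ((r:ℝ) - 1/2) := by
      rw [Real.div_rpow hk0.le hn0.le, div_eq_mul_inv, ← Real.rpow_neg hn0.le]
      congr 1
      ring
    have e2 : Real.sqrt (n:ℝ) = (n:ℝ) ^ ((1:ℝ)/2) := Real.sqrt_eq_rpow (n:ℝ)
    have e3 : ((r - 1 : ℕ) : ℝ) = (r:ℝ) - 1 := by
      have : 1 ≤ r := by omega
      push_cast [this]; ring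
    have e4 : (n : ℝ) ^ (r - 1) = (n:ℝ) ^ ((r:ℝ) - 1) := by
      rw [← e3, Real.rpow_natCast]
    have hk' : (k:ℝ)^((r:ℝ)/2) * (k:ℝ)^(-(r:ℝ)+1/2) * (k:ℝ)^(-1:ℝ)
        = (k:ℝ)^(-(r:ℝ)/2 - 1/2) := by
      rw [← Real.rpow_add hk0, ← Real.rpow_add hk0]
      congr 1
      ring
    have hn' : (n:ℝ)^((r:ℝ)-1/2) * (n:ℝ)^(-((1:ℝ)/2)) = (n:ℝ)^((r:ℝ)-1) := by
      rw [← Real.rpow_add hn0]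
      congr 1
      ring
    have hdiv : (4:ℝ) / ((k:ℝ) * (n:ℝ)^((1:ℝ)/2)) =
        4 * (k:ℝ)^(-1:ℝ) * (n:ℝ)^(-((1:ℝ)/2)) := by
      rw [Real.rpow_neg hn0.le, Real.rpow_neg_one]
      field_simp
    rw [hM, e1, e2, e4, hdiv]
    calc A * (k:ℝ)^((r:ℝ)/2) * ((k:ℝ)^(-(r:ℝ)+1/2) * (n:ℝ)^((r:ℝ)-1/2)) * Real.exp (2*π) *
          (4 * (k:ℝ)^(-1:ℝ) * (n:ℝ)^(-((1:ℝ)/2)))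
        = 4 * Real.exp (2*π) * A * ((n:ℝ)^((r:ℝ)-1/2) * (n:ℝ)^(-((1:ℝ)/2))) *
          ((k:ℝ)^((r:ℝ)/2) * (k:ℝ)^(-(r:ℝ)+1/2) * (k:ℝ)^(-1:ℝ)) := by ring
      _ = 4 * Real.exp (2*π) * A * (n:ℝ)^((r:ℝ)-1) * (k:ℝ)^(-(r:ℝ)/2 - 1/2) := by
          rw [hn', hk']
  calc ‖(∫ φ : ℝ in (-ϑ₁)..ϑ₂,
        E ((k : ℂ) / n - I * k * φ) * Complex.exp (2 * π * n * ((k : ℂ) / n - I * k * φ) / k))‖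
      ≤ M * |ϑ₂ - (-ϑ₁)| := hInt
    _ ≤ M * (4 / ((k:ℝ) * Real.sqrt n)) := mul_le_mul_of_nonneg_left hlen hM0
    _ = 4 * Real.exp (2*π) * A * (n : ℝ) ^ (r - 1) * (k : ℝ) ^ (-(r : ℝ) / 2 - 1 / 2) := hkey
end
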